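/- arXiv:2009.06481 — 3 statements merged into one kernel-verified Lean document; each statement's English description precedes it below -/
import Mathlib

section
/- Let R be a commutative Noetherian ring, let Z be a specialization-closed subset of Spec R, let M be a finitely generated R-module and let N be an arbitrary R-module. Then gr_R(Z, Hom_R(M, N)) ≥ min{ 2, gr_R(Z, N) }. -/
/-! Common definitions: local cohomology with respect to specialization-closed subsets,
depth, grade, homological dimensions, Tate homology, etc. -/

open CategoryTheory

universe u

section SpecClosed

variable (R : Type u) [CommRing R]

/-- A subset of the prime spectrum is specialization-closed if it is closed under
passing to larger primes. -/
def IsSpecClosed (Z : Set (PrimeSpectrum R)) : Prop :=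
  ∀ ⦃p q : PrimeSpectrum R⦄, p ∈ Z → p.asIdeal ≤ q.asIdeal → q ∈ Z

variable (Z : Set (PrimeSpectrum R))

/-- The `Z`-torsion submodule `Γ_Z(M) = { m | Supp(Rm) ⊆ Z }` (described via annihilators:
`Supp(Rm) = V(Ann m)`). -/
def torsionZ (M : Type u) [AddCommGroup M] [Module R M] : Submodule R M where
  carrier := {m : M | ∀ p : PrimeSpectrum R, (R ∙ m).annihilator ≤ p.asIdeal → p ∈ Z}
  zero_mem' := by
    intro p hp
    exfalso
    apply p.isPrime.ne_top
    rw [eq_top_iff]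
    refine le_trans ?_ hp
    intro r _
    rw [Submodule.mem_annihilator_span_singleton, smul_zero]
  add_mem' := by
    intro a b ha hb p hp
    have h : (R ∙ a).annihilator ⊓ (R ∙ b).annihilator ≤ p.asIdeal := by
      refine le_trans ?_ hp
      intro r hr
      rw [Submodule.mem_inf, Submodule.mem_annihilator_span_singleton,
        Submodule.mem_annihilator_span_singleton] at hr
      rw [Submodule.mem_annihilator_span_singleton, smul_add, hr.1, hr.2, add_zero]
    rcases (Ideal.IsPrime.inf_le p.isPrime).mp h with h' | h'
    · exact ha p h'
    · exact hb p h'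
  smul_mem' := by
    intro c m hm p hp
    refine hm p (le_trans ?_ hp)
    intro r hr
    rw [Submodule.mem_annihilator_span_singleton] at hr ⊢
    rw [smul_comm, hr, smul_zero]

lemma torsionZ_map_mem {M N : Type u} [AddCommGroup M] [Module R M] [AddCommGroup N]
    [Module R N] (f : M →ₗ[R] N) (m : M) (hm : m ∈ torsionZ R Z M) :
    f m ∈ torsionZ R Z N := by
  intro p hp
  refine hm p (le_trans ?_ hp)
  intro r hr
  rw [Submodule.mem_annihilator_span_singleton] at hr ⊢
  rw [← map_smul, hr, map_zero]

/-- The `Z`-torsion functor `Γ_Z : Mod_R ⥤ Mod_R`. -/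
@[simps]
noncomputable def gammaZ : ModuleCat.{u} R ⥤ ModuleCat.{u} R where
  obj M := ModuleCat.of R (torsionZ R Z M)
  map {M N} f := ModuleCat.ofHom (LinearMap.restrict f.hom (fun m hm => torsionZ_map_mem R Z f.hom m hm))
  map_id _ := by ext; rfl
  map_comp _ _ := by ext; rfl

instance : (gammaZ R Z).Additive where
  map_add := by intros; ext; rfl

/-- Local cohomology with respect to a subset `Z ⊆ Spec R`, defined as the
right derived functors of the `Z`-torsion functor `Γ_Z`. -/
noncomputable def localCohomologyZ (i : ℕ) : ModuleCat.{u} R ⥤ ModuleCat.{u} R :=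
  (gammaZ R Z).rightDerived i

/-- `H^i_Z(M)`, the `i`-th local cohomology of `M` with respect to `Z`. -/
noncomputable abbrev HZ (i : ℕ) (M : Type u) [AddCommGroup M] [Module R M] :=
  ((localCohomologyZ R Z i).obj (ModuleCat.of R M))

/-- The grade of `M` with respect to `Z`: the least `i` with `H^i_Z(M) ≠ 0`
(`⊤` if there is no such `i`). -/
noncomputable def gradeZ (M : Type u) [AddCommGroup M] [Module R M] : ℕ∞ :=
  sInf {i : ℕ∞ | ∃ n : ℕ, i = n ∧ Nontrivial (HZ R Z n M)}

end SpecClosed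

/-- The closed subset `V(m) ⊆ Spec R` of a local ring; local cohomology with respect to it
is the classical local cohomology `H^i_m`. -/
def maxSet (R : Type u) [CommRing R] [IsLocalRing R] : Set (PrimeSpectrum R) :=
  {p | IsLocalRing.maximalIdeal R ≤ p.asIdeal}

section Depth

/-- The depth of a module over a local ring: the supremum of lengths of weakly regular
sequences on `M` contained in the maximal ideal. (The zero module has depth `⊤`.) -/
noncomputable def moduleDepth (R : Type u) [CommRing R] [IsLocalRing R]
    (M : Type u) [AddCommGroup M] [Module R M] : ℕ∞ :=
  sSup {n : ℕ∞ | ∃ rs : List R, (rs.length : ℕ∞) = n ∧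
    (∀ r ∈ rs, r ∈ IsLocalRing.maximalIdeal R) ∧ RingTheory.Sequence.IsWeaklyRegular M rs}

/-- The depth of the localized module `M_p` over the local ring `R_p`. -/
noncomputable def localizedDepth (R : Type u) [CommRing R] (p : PrimeSpectrum R)
    (M : Type u) [AddCommGroup M] [Module R M] : ℕ∞ :=
  moduleDepth (Localization.AtPrime p.asIdeal) (LocalizedModule p.asIdeal.primeCompl M)

/-- The height of a prime ideal, as the height of the corresponding point of `Spec R`. -/
noncomputable def primeHeight {R : Type u} [CommRing R] (p : PrimeSpectrum R) : ℕ∞ :=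
  Order.height p

/-- Serre's condition `(S_n)`: `depth M_p ≥ min(n, ht p)` for all primes `p`. -/
def SerreSn (R : Type u) [CommRing R] (M : Type u) [AddCommGroup M] [Module R M]
    (n : ℕ) : Prop :=
  ∀ p : PrimeSpectrum R, min (n : ℕ∞) (primeHeight p) ≤ localizedDepth R p M

/-- A module `N` over a local ring `S` is maximal Cohen–Macaulay if `depth N = dim S`
(for nonzero finitely generated `N`; the zero module is trivially allowed since its
depth is `⊤`). -/
def IsMaximalCohenMacaulay (S : Type u) [CommRing S] [IsLocalRing S]
    (N : Type u) [AddCommGroup N] [Module S N] : Prop :=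
  ringKrullDim S ≤ (moduleDepth S N : WithBot ℕ∞)

/-- A local ring is Cohen–Macaulay if it is Noetherian and its depth equals its dimension. -/
def IsCohenMacaulayLocalRing (R : Type u) [CommRing R] [IsLocalRing R] : Prop :=
  IsNoetherianRing R ∧ (moduleDepth R R : WithBot ℕ∞) = ringKrullDim R

/-- A ring is regular local if it is Noetherian local and its maximal ideal is generated
by `dim R` elements. -/
def IsRegularLocal (R : Type u) [CommRing R] : Prop :=
  ∃ _ : IsLocalRing R, IsNoetherianRing R ∧
    ∃ s : Finset R, Ideal.span (s : Set R) = IsLocalRing.maximalIdeal R ∧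
      ((s.card : ℕ∞) : WithBot ℕ∞) = ringKrullDim R

/-- A local ring is a complete intersection if it is Noetherian and its `m`-adic completion
is a quotient of a regular local ring by an ideal generated by a regular sequence. -/
def IsCompleteIntersectionLocal (R : Type u) [CommRing R] [IsLocalRing R] : Prop :=
  IsNoetherianRing R ∧
  ∃ (Q : Type u) (_ : CommRing Q), IsRegularLocal Q ∧
    ∃ rs : List Q, RingTheory.Sequence.IsRegular Q rs ∧
      Nonempty ((AdicCompletion (IsLocalRing.maximalIdeal R) R) ≃+* (Q ⧸ Ideal.ofList rs))

end Depth

section HomologicalAlgebra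

variable (R : Type u) [CommRing R]

/-- `Ext_R^n(M, N)`, as an object of `ModuleCat R` (derived functor `Ext` of `Hom`). -/
noncomputable abbrev ExtMod (n : ℕ) (M N : Type u) [AddCommGroup M] [Module R M]
    [AddCommGroup N] [Module R N] : ModuleCat.{u} R :=
  ((Ext R (ModuleCat.{u} R) n).obj (Opposite.op (ModuleCat.of R M))).obj (ModuleCat.of R N)

/-- `Tor^R_n(M, N)`, as an object of `ModuleCat R` (derived functor of the tensor product). -/
noncomputable abbrev TorMod (n : ℕ) (M N : Type u) [AddCommGroup M] [Module R M]
    [AddCommGroup N] [Module R N] : ModuleCat.{u} R :=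
  ((Tor (ModuleCat.{u} R) n).obj (ModuleCat.of R M)).obj (ModuleCat.of R N)

/-- A module `N` is Tor-rigid if for every module `X`, the vanishing of a single
`Tor_j(X, N)` with `j ≥ 1` forces the vanishing of `Tor_i(X, N)` for all `i ≥ j`. -/
def IsTorRigid (N : Type u) [AddCommGroup N] [Module R N] : Prop :=
  ∀ (X : Type u) [AddCommGroup X] [Module R X], ∀ j : ℕ, 1 ≤ j →
    Subsingleton (TorMod R j X N) → ∀ i, j ≤ i → Subsingleton (TorMod R i X N)

/-- `M` has projective dimension at most `n`. -/
def pdLE : (n : ℕ) → (M : Type u) → [AddCommGroup M] → [Module R M] → Prop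
  | 0, M, _, _ => Module.Projective R M
  | (n+1), M, _, _ => ∃ (P : Type u) (_ : AddCommGroup P) (_ : Module R P)
      (f : P →ₗ[R] M), Module.Projective R P ∧ Function.Surjective f ∧
        pdLE n (LinearMap.ker f)

open Classical in
/-- The projective dimension of a module: `⊥` for the zero module, `⊤` if infinite. -/
noncomputable def projDim (M : Type u) [AddCommGroup M] [Module R M] : WithBot ℕ∞ :=
  if Subsingleton M then ⊥
  else sInf {d : WithBot ℕ∞ | ∃ n : ℕ, d = (n : ℕ∞) ∧ pdLE R n M}

/-- `M` has injective dimension at most `n`. -/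
def idLE : (n : ℕ) → (M : Type u) → [AddCommGroup M] → [Module R M] → Prop
  | 0, M, _, _ => Module.Injective R M
  | (n+1), M, _, _ => ∃ (E : Type u) (_ : AddCommGroup E) (_ : Module R E)
      (f : M →ₗ[R] E), Module.Injective R E ∧ Function.Injective f ∧
        idLE n (E ⧸ LinearMap.range f)

/-- A local ring is Gorenstein if it is Noetherian and of finite self-injective dimension. -/
def IsGorensteinLocal : Prop :=
  IsLocalRing R ∧ IsNoetherianRing R ∧ ∃ n : ℕ, idLE R n R

/-- `M` is totally reflexive (i.e. of Gorenstein dimension zero): it is finitely generated,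
reflexive, and `Ext^i(M, R) = 0 = Ext^i(M^*, R)` for all `i ≥ 1`. -/
def IsTotallyReflexive (M : Type u) [AddCommGroup M] [Module R M] : Prop :=
  Module.Finite R M ∧ Function.Bijective (Module.Dual.eval R M) ∧
    ∀ i : ℕ, 1 ≤ i → Subsingleton (ExtMod R i M R) ∧
      Subsingleton (ExtMod R i (Module.Dual R M) R)

/-- `M` has Gorenstein dimension at most `n`. -/
def GdimLE : (n : ℕ) → (M : Type u) → [AddCommGroup M] → [Module R M] → Prop
  | 0, M, _, _ => IsTotallyReflexive R M
  | (n+1), M, _, _ => ∃ (G : Type u) (_ : AddCommGroup G) (_ : Module R G)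
      (f : G →ₗ[R] M), IsTotallyReflexive R G ∧ Function.Surjective f ∧
        GdimLE n (LinearMap.ker f)

/-- The non-free locus `NF(M) = { p | M_p is not R_p-free }`. -/
def nonFreeLocus (M : Type u) [AddCommGroup M] [Module R M] : Set (PrimeSpectrum R) :=
  {p | ¬ Module.Free (Localization.AtPrime p.asIdeal) (LocalizedModule p.asIdeal.primeCompl M)}

/-- `M` is locally free on the punctured spectrum of the local ring `R`. -/
def LocFreeOnPunctured [IsLocalRing R] (M : Type u) [AddCommGroup M] [Module R M] : Prop :=
  ∀ p : PrimeSpectrum R, p.asIdeal ≠ IsLocalRing.maximalIdeal R →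
    Module.Free (Localization.AtPrime p.asIdeal) (LocalizedModule p.asIdeal.primeCompl M)

/-- The minimal number of generators of a module. -/
noncomputable def minGens (M : Type u) [AddCommGroup M] [Module R M] : ℕ :=
  sInf {n : ℕ | ∃ s : Finset M, s.card = n ∧ Submodule.span R (s : Set M) = ⊤}

/-- The complexity `cx_R(M, N)` of a pair of modules: the least `b` such that
`ν_R(Ext^n_R(M, N)) ≤ a·n^(b-1)` for some `a` and all large `n` (`⊤` if there is none). -/
noncomputable def complexityPair (M N : Type u) [AddCommGroup M] [Module R M]
    [AddCommGroup N] [Module R N] : ℕ∞ :=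
  sInf {c : ℕ∞ | ∃ b : ℕ, c = b ∧ ∃ a : ℝ, ∃ n₀ : ℕ, ∀ n : ℕ, n₀ ≤ n →
    (minGens R (ExtMod R n M N) : ℝ) ≤ a * (n : ℝ) ^ ((b : ℝ) - 1)}

/-- The grade of the pair `(A, K)`: the least `i` with `Ext^i_R(A, K) ≠ 0`
(`⊤` if there is none). -/
noncomputable def gradePair (A K : Type u) [AddCommGroup A] [Module R A]
    [AddCommGroup K] [Module R K] : ℕ∞ :=
  sInf {i : ℕ∞ | ∃ n : ℕ, i = n ∧ Nontrivial (ExtMod R n A K)}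

end HomologicalAlgebra

section Tate

variable (R : Type u) [CommRing R]

/-- A complete resolution of an `R`-module `M`: a totally acyclic complex `T` of finitely
generated free modules, a projective resolution `P` of `M`, and a chain map `τ : T ⟶ P`
which is an isomorphism in all sufficiently high degrees. -/
structure CompleteResolution (M : Type u) [AddCommGroup M] [Module R M] where
  /-- the totally acyclic complex -/
  T : ChainComplex (ModuleCat.{u} R) ℤ
  /-- the projective resolution of `M` -/
  P : ChainComplex (ModuleCat.{u} R) ℤ
  free : ∀ i : ℤ, Module.Free R (T.X i)
  fin : ∀ i : ℤ, Module.Finite R (T.X i)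
  t_exact : ∀ i : ℤ, Function.Exact (T.d (i+1) i) (T.d i (i-1))
  t_dual_exact : ∀ i : ℤ, Function.Exact
    (LinearMap.dualMap ((T.d i (i-1)).hom : T.X i →ₗ[R] T.X (i-1)))
    (LinearMap.dualMap ((T.d (i+1) i).hom : T.X (i+1) →ₗ[R] T.X i))
  proj : ∀ i : ℤ, Projective (P.X i)
  p_bounded : ∀ i : ℤ, i < 0 → Subsingleton (P.X i)
  p_exact : ∀ i : ℤ, i ≠ 0 → Function.Exact (P.d (i+1) i) (P.d i (i-1))
  π : P.X 0 →ₗ[R] M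
  π_surj : Function.Surjective π
  π_exact : Function.Exact (P.d 1 0) π
  τ : T ⟶ P
  bound : ℤ
  τ_iso : ∀ i : ℤ, bound ≤ i → Function.Bijective (τ.f i)

/-- The Tate homology `TateTor^R_i(M, N)` computed from a complete resolution of `M`: the
degree `i` homology of `T ⊗_R N`. -/
noncomputable abbrev tateTor {M : Type u} [AddCommGroup M] [Module R M]
    (C : CompleteResolution R M) (N : Type u) [AddCommGroup N] [Module R N] (i : ℤ) :=
  (LinearMap.ker (LinearMap.rTensor N ((C.T.d i (i-1)).hom : C.T.X i →ₗ[R] C.T.X (i-1)))) ⧸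
    (Submodule.comap
      (LinearMap.ker (LinearMap.rTensor N ((C.T.d i (i-1)).hom : C.T.X i →ₗ[R] C.T.X (i-1)))).subtype
      (LinearMap.range (LinearMap.rTensor N ((C.T.d (i+1) i).hom : C.T.X (i+1) →ₗ[R] C.T.X i))))

end Tate

section Frobenius

variable (R : Type u) [CommRing R]

/-- `R` viewed as an `R`-module via the `n`-th iterate of the Frobenius endomorphism
`φ(a) = a^p`: the action is `r · b = r^(p^n) * b`. -/
def FrobeniusTwist (p : ℕ) (n : ℕ) : Type u := R

instance (p n : ℕ) : AddCommGroup (FrobeniusTwist R p n) := inferInstanceAs (AddCommGroup R)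

noncomputable instance (p n : ℕ) [ExpChar R p] : Module R (FrobeniusTwist R p n) :=
  Module.compHom R (iterateFrobenius R p n)

end Frobenius

section Syzygy

/-- `S` is an `i`-th syzygy of the residue field of the local ring `R`, computed from
minimal free covers. -/
def IsMinSyzygyOfResidueField (R : Type u) [CommRing R] [IsLocalRing R] :
    (i : ℕ) → (S : Type u) → [AddCommGroup S] → [Module R S] → Prop
  | 0, S, _, _ => Nonempty (S ≃ₗ[R] IsLocalRing.ResidueField R)
  | (i+1), S, _, _ => ∃ (N : Type u) (_ : AddCommGroup N) (_ : Module R N)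
      (F : Type u) (_ : AddCommGroup F) (_ : Module R F) (f : F →ₗ[R] N),
      Module.Free R F ∧ Module.Finite R F ∧ IsMinSyzygyOfResidueField R i N ∧
      Function.Surjective f ∧
      LinearMap.ker f ≤ (IsLocalRing.maximalIdeal R) • (⊤ : Submodule R F) ∧
      Nonempty (S ≃ₗ[R] LinearMap.ker f)

end Syzygy

section CIDim

variable (R : Type u) [CommRing R] [IsLocalRing R]

/-- `M` has finite complete intersection dimension: there is a quasi-deformation
`R → A ↞ Q` (with `R → A` faithfully flat local and `Q ↠ A` surjective local with kernel
generated by a regular sequence) such that `pd_Q(A ⊗_R M)` is finite. -/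
def HasFiniteCIDim (M : Type u) [AddCommGroup M] [Module R M] : Prop :=
  ∃ (A : Type u) (_ : CommRing A) (_ : IsLocalRing A)
    (Q : Type u) (_ : CommRing Q) (_ : IsLocalRing Q)
    (φ : R →+* A) (σ : Q →+* A),
      IsLocalHom φ ∧ IsLocalHom σ ∧ Function.Surjective σ ∧
      (∃ rs : List Q, RingHom.ker σ = Ideal.ofList rs ∧ RingTheory.Sequence.IsRegular Q rs) ∧
      (letI : Module R A := Module.compHom A φ
       Module.FaithfullyFlat R A ∧
       (letI : SMulCommClass R A A := ⟨fun r a b => mul_left_comm (φ r) a b⟩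
        letI : Module Q (TensorProduct R A M) := Module.compHom (TensorProduct R A M) σ
        ∃ n : ℕ, pdLE Q n (TensorProduct R A M)))

end CIDim

/-! ### Auxiliary machinery -/

noncomputable section Aux1

namespace Aux1

open CategoryTheory Category Limits Injective

universe v w

variable {C : Type w} [Category.{v} C] [Abelian C] [EnoughInjectives C]

/-- Generalized `InjectiveResolution.ofCocomplex`, starting from a given map into
an injective object. -/
def ofCocomplex' {Z J : C} (f : Z ⟶ J) [Injective J] : CochainComplex C ℕ :=
  CochainComplex.mk' J (Injective.syzygies f) (Injective.d f)
    fun g => ⟨_, Injective.d g, by exact (cokernel.condition_assoc g _).trans zero_comp⟩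

lemma ofCocomplex'_d_0_1 {Z J : C} (f : Z ⟶ J) [Injective J] :
    (ofCocomplex' f).d 0 1 = d f := by simp [ofCocomplex']

lemma of_d_exact_aux (X : ℕ → C) (dd : ∀ n, X n ⟶ X (n + 1)) (n : ℕ)
    (w : dd n ≫ dd (n + 1) = 0) (h : (ShortComplex.mk (dd n) (dd (n + 1)) w).Exact) :
    (ShortComplex.mk (CochainComplex.of.d X dd n (n + 1))
      (CochainComplex.of.d X dd (n + 1) (n + 1 + 1))
      (by simpa only [CochainComplex.of_d] using w)).Exact := by
  simpa only [CochainComplex.of_d] using h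

lemma ofCocomplex'_exactAt_succ {Z J : C} (f : Z ⟶ J) [Injective J] (n : ℕ) :
    (ofCocomplex' f).ExactAt (n + 1) := by
  rw [HomologicalComplex.exactAt_iff' _ n (n + 1) (n + 1 + 1) (by simp) (by simp)]
  dsimp [ofCocomplex', CochainComplex.mk', CochainComplex.mk, HomologicalComplex.sc',
      HomologicalComplex.shortComplexFunctor']
  match n with
  | 0 => exact of_d_exact_aux (C := C) _ _ 0 _ (exact_f_d ((CochainComplex.mkAux _ _ _ (d f) (d (d f)) _ _ 0).f))
  | n+1 => exact of_d_exact_aux (C := C) _ _ (n+1) _ (exact_f_d ((CochainComplex.mkAux _ _ _ (d f) (d (d f)) _ _ (n+1)).f))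

instance {Z J : C} (f : Z ⟶ J) [Injective J] (n : ℕ) : Injective ((ofCocomplex' f).X n) := by
  obtain (_ | _ | _ | n) := n
  · exact (inferInstance : Injective J)
  all_goals apply Injective.injective_under

/-- Generalized `InjectiveResolution.of`, starting from a given mono into an injective
object. -/
def resOf {Z J : C} (f : Z ⟶ J) [Injective J] [Mono f] : InjectiveResolution Z where
  cocomplex := ofCocomplex' f
  ι := (CochainComplex.fromSingle₀Equiv _ _).symm ⟨f,
    by rw [ofCocomplex'_d_0_1]; exact (cokernel.condition_assoc f _).trans zero_comp⟩
  quasiIso := ⟨fun n => by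
    cases n
    · rw [CochainComplex.quasiIsoAt₀_iff, ShortComplex.quasiIso_iff_of_zeros]
      · refine (ShortComplex.exact_and_mono_f_iff_of_iso ?_).2
          ⟨exact_f_d f, by dsimp; infer_instance⟩
        exact ShortComplex.isoMk (Iso.refl _) (Iso.refl _) (Iso.refl _)
          (by exact (Category.id_comp f).trans ((CochainComplex.fromSingle₀Equiv_symm_apply_f_zero
            (C := ofCocomplex' f) (X := Z) f _).symm.trans (Category.comp_id _).symm))
          (by exact (Category.id_comp (d f)).trans ((ofCocomplex'_d_0_1 f).symm.trans
            (Category.comp_id _).symm))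
      all_goals rfl
    · rw [quasiIsoAt_iff_exactAt]
      · apply ofCocomplex'_exactAt_succ
      · apply CochainComplex.exactAt_succ_single_obj⟩

@[simp] lemma resOf_cocomplex_X_zero {Z J : C} (f : Z ⟶ J) [Injective J] [Mono f] :
    (resOf f).cocomplex.X 0 = J := rfl

lemma resOf_ι_f_zero {Z J : C} (f : Z ⟶ J) [Injective J] [Mono f] :
    (resOf f).ι.f 0 = f := by
  exact CochainComplex.fromSingle₀Equiv_symm_apply_f_zero _ _

end Aux1

section Aux2

open CategoryTheory Limits

variable {R : Type u} [CommRing R] {Z : Set (PrimeSpectrum R)}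

lemma mem_torsionZ_of_ann_le {M N : Type u} [AddCommGroup M] [Module R M]
    [AddCommGroup N] [Module R N] {m : M} (hm : m ∈ torsionZ R Z M) {x : N}
    (h : ∀ r : R, r • m = 0 → r • x = 0) : x ∈ torsionZ R Z N := by
  intro p hp
  refine hm p (le_trans ?_ hp)
  intro r hr
  rw [Submodule.mem_annihilator_span_singleton] at hr ⊢
  exact h r hr

lemma mem_torsionZ_of_injective {M N : Type u} [AddCommGroup M] [Module R M]
    [AddCommGroup N] [Module R N] (f : M →ₗ[R] N) (hf : Function.Injective f) {m : M}
    (h : f m ∈ torsionZ R Z N) : m ∈ torsionZ R Z M :=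
  mem_torsionZ_of_ann_le h (fun r hr => hf (by rw [map_smul, hr, map_zero]))

lemma pi_mem_torsionZ {n : ℕ} {M : Type u} [AddCommGroup M] [Module R M]
    {m : Fin n → M} (hm : ∀ i, m i ∈ torsionZ R Z M) :
    m ∈ torsionZ R Z (Fin n → M) := by
  rw [← Finset.univ_sum_single m]
  exact Submodule.sum_mem _ (fun i _ =>
    torsionZ_map_mem R Z (LinearMap.single R (fun _ => M) i) (m i) (hm i))

lemma torsionZ_hom_eq_bot {L N : Type u} [AddCommGroup L] [Module R L]
    [AddCommGroup N] [Module R N] (hN : torsionZ R Z N = ⊥) :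
    torsionZ R Z (L →ₗ[R] N) = ⊥ := by
  rw [eq_bot_iff]
  intro f hf
  simp only [Submodule.mem_bot]
  ext x
  have : f x ∈ torsionZ R Z N :=
    mem_torsionZ_of_ann_le hf (fun r hr => by
      rw [← LinearMap.smul_apply, hr, LinearMap.zero_apply])
  rw [hN] at this
  simpa using this

lemma moduleCat_subsingleton_of_isZero {M : ModuleCat.{u} R} (h : IsZero M) :
    Subsingleton M := by
  refine ⟨fun a b => ?_⟩
  have h0 : (𝟙 M : M ⟶ M) = 0 := h.eq_of_src _ _
  have ha : ∀ x : M, x = 0 := fun x => by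
    calc x = (𝟙 M : M ⟶ M) x := rfl
    _ = (0 : M ⟶ M) x := by rw [h0]
    _ = 0 := rfl
  rw [ha a, ha b]

lemma subsingleton_HZ_iff (L : Type u) [AddCommGroup L] [Module R L]
    (I : InjectiveResolution (ModuleCat.of R L)) (n : ℕ) :
    Subsingleton (HZ R Z n L) ↔
      (((gammaZ R Z).mapHomologicalComplex (ComplexShape.up ℕ)).obj I.cocomplex).ExactAt n := by
  rw [HomologicalComplex.exactAt_iff_isZero_homology]
  have e : (HZ R Z n L) ≅
      (HomologicalComplex.homologyFunctor _ _ n).obj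
        (((gammaZ R Z).mapHomologicalComplex (ComplexShape.up ℕ)).obj I.cocomplex) :=
    I.isoRightDerivedObj (gammaZ R Z) n
  constructor
  · intro h
    exact IsZero.of_iso (ModuleCat.isZero_of_subsingleton (HZ R Z n L)) e.symm
  · intro h
    exact moduleCat_subsingleton_of_isZero (IsZero.of_iso h e)

lemma cochain_exactAt_zero_iff (K : CochainComplex (ModuleCat.{u} R) ℕ) :
    K.ExactAt 0 ↔ ∀ x : K.X 0, K.d 0 1 x = 0 → x = 0 := by
  rw [HomologicalComplex.exactAt_iff' K 0 0 1 (by simp) (by simp),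
    ShortComplex.moduleCat_exact_iff]
  dsimp [HomologicalComplex.sc', HomologicalComplex.shortComplexFunctor']
  constructor
  · intro h x hx
    obtain ⟨y, hy⟩ := h x hx
    have hd : K.d 0 0 = 0 := K.shape _ _ (by simp)
    rw [hd] at hy
    exact hy.symm.trans rfl
  · intro h x hx
    exact ⟨0, by simp [h x hx]; rfl⟩

lemma cochain_exactAt_one_iff (K : CochainComplex (ModuleCat.{u} R) ℕ) :
    K.ExactAt 1 ↔ ∀ x : K.X 1, K.d 1 2 x = 0 → ∃ y : K.X 0, K.d 0 1 y = x := by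
  rw [HomologicalComplex.exactAt_iff' K 0 1 2 (by simp) (by simp),
    ShortComplex.moduleCat_exact_iff]
  dsimp [HomologicalComplex.sc', HomologicalComplex.shortComplexFunctor']
  exact Iff.rfl

lemma subsingleton_HZ_zero_iff (L : Type u) [AddCommGroup L] [Module R L] :
    Subsingleton (HZ R Z 0 L) ↔ torsionZ R Z L = ⊥ := by
  set I := InjectiveResolution.of (ModuleCat.of R L) with hI
  rw [subsingleton_HZ_iff L I 0, cochain_exactAt_zero_iff]
  have hu : Function.Injective (I.ι.f 0) := by
    rw [← ModuleCat.mono_iff_injective]; infer_instance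
  have hud : ∀ l : ModuleCat.of R L, I.cocomplex.d 0 1 (I.ι.f 0 l) = 0 := by
    intro l
    exact LinearMap.congr_fun (congrArg ModuleCat.Hom.hom I.ι_f_zero_comp_complex_d) l
  constructor
  · intro h
    rw [eq_bot_iff]
    intro l hl
    have hx : I.ι.f 0 l ∈ torsionZ R Z (I.cocomplex.X 0) :=
      torsionZ_map_mem R Z (I.ι.f 0).hom l hl
    have := h ⟨I.ι.f 0 l, hx⟩ (by
      apply Subtype.ext
      simp only [Functor.mapHomologicalComplex_obj_d]
      exact hud l)
    have hval : I.ι.f 0 l = 0 := congrArg Subtype.val this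
    exact hu (hval.trans (map_zero _).symm : I.ι.f 0 l = I.ι.f 0 0)
  · intro h x hx
    have hx1 : I.cocomplex.d 0 1 x.1 = 0 := by
      have := congrArg Subtype.val hx
      exact this
    obtain ⟨l, hl⟩ := (ShortComplex.moduleCat_exact_iff _).1 I.exact₀ x.1 hx1
    have hlt : l ∈ torsionZ R Z L :=
      mem_torsionZ_of_injective (I.ι.f 0).hom hu (by rw [hl]; exact x.2)
    rw [h] at hlt
    apply Subtype.ext
    have hl0 : l = 0 := (Submodule.mem_bot R).1 hlt
    rw [← hl, hl0, map_zero]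
    rfl

end Aux2

section Aux3

open CategoryTheory Limits

variable {R : Type u} [CommRing R] {Z : Set (PrimeSpectrum R)}

lemma moduleInjective_pi {n : ℕ} {E : Type u} [AddCommGroup E] [Module R E]
    (hE : Module.Injective R E) : Module.Injective R (Fin n → E) where
  out X Y _ _ _ _ f hf g := by
    have H : ∀ i : Fin n, ∃ h : Y →ₗ[R] E, ∀ x, h (f x) = (LinearMap.proj i).comp g x :=
      fun i => hE.out f hf ((LinearMap.proj i).comp g)
    choose h hh using H
    exact ⟨LinearMap.pi h, fun x => funext fun i => hh i x⟩

lemma h1_lift {L : Type u} [AddCommGroup L] [Module R L] (E : ModuleCat.{u} R) [Injective E]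
    (e : ModuleCat.of R L ⟶ E) [Mono e]
    (h1 : Subsingleton (HZ R Z 1 L)) (q : ↑E ⧸ LinearMap.range e.hom)
    (hq : q ∈ torsionZ R Z (↑E ⧸ LinearMap.range e.hom)) :
    ∃ w : E, w ∈ torsionZ R Z E ∧ Submodule.Quotient.mk w = q := by
  set I : InjectiveResolution (ModuleCat.of R L) := Aux1.resOf e with hI
  have hex := (cochain_exactAt_one_iff _).1 ((subsingleton_HZ_iff L I 1).1 h1)
  obtain ⟨y, rfl⟩ := Submodule.Quotient.mk_surjective _ q
  have hι : I.ι.f 0 = e := Aux1.resOf_ι_f_zero e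
  have hcomp : e ≫ I.cocomplex.d 0 1 = 0 := by rw [← hι]; exact I.ι_f_zero_comp_complex_d
  have hed : ∀ l, I.cocomplex.d 0 1 (e l) = 0 := fun l => LinearMap.congr_fun (congrArg ModuleCat.Hom.hom hcomp) l
  have hker : ∀ z : E, I.cocomplex.d 0 1 z = 0 → ∃ l, e l = z := by
    intro z hz
    obtain ⟨l, hl⟩ := (ShortComplex.moduleCat_exact_iff _).1 I.exact₀ z hz
    exact ⟨l, by rw [← hι]; exact hl⟩
  set x : I.cocomplex.X 1 := I.cocomplex.d 0 1 y with hx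
  have hxt : x ∈ torsionZ R Z (I.cocomplex.X 1) := by
    refine mem_torsionZ_of_ann_le hq ?_
    intro r hr
    rw [← Submodule.Quotient.mk_smul, Submodule.Quotient.mk_eq_zero] at hr
    obtain ⟨l, hl⟩ := hr
    rw [hx]
    have h2 : (I.cocomplex.d 0 1) (r • y) = 0 := by rw [← hl]; exact hed l
    exact (map_smul (I.cocomplex.d 0 1).hom r y).symm.trans h2
  have hx2 : I.cocomplex.d 1 2 x = 0 :=
    LinearMap.congr_fun (congrArg ModuleCat.Hom.hom (I.cocomplex.d_comp_d 0 1 2)) y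
  obtain ⟨w', hw'⟩ := hex ⟨x, hxt⟩ (Subtype.ext hx2)
  let y0 : ↑(I.cocomplex.X 0) := y
  have hw'd : I.cocomplex.d 0 1 w'.1 = x := congrArg Subtype.val hw'
  have hy0 : I.cocomplex.d 0 1 y0 = x := hx.symm
  refine ⟨w'.1, w'.2, ?_⟩
  apply (Submodule.Quotient.eq _).2
  have hd0 : I.cocomplex.d 0 1 (w'.1 - y0) = 0 := by
    rw [map_sub, hw'd, hy0, sub_self]
  obtain ⟨l, hl⟩ := hker _ hd0
  exact ⟨l, hl⟩

lemma subsingleton_HZ_one_hom (M N : Type u) [AddCommGroup M] [Module R M] [Module.Finite R M]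
    [AddCommGroup N] [Module R N]
    (h0 : Subsingleton (HZ R Z 0 N)) (h1 : Subsingleton (HZ R Z 1 N)) :
    Subsingleton (HZ R Z 1 (M →ₗ[R] N)) := by
  classical
  have hN0 : torsionZ R Z N = ⊥ := (subsingleton_HZ_zero_iff N).1 h0
  obtain ⟨n, π, hπ⟩ := Module.Finite.exists_fin' R M
  set s : Fin n → M := fun i => π (Pi.single i 1) with hs
  have hsingle : ∀ x : Fin n → R, ∑ i, x i • Pi.single (M := fun _ : Fin n => R) i 1 = x := by
    intro x
    funext jj
    rw [Finset.sum_apply]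
    simp [Pi.single_apply, Pi.smul_apply, smul_eq_mul, mul_ite, mul_one, mul_zero,
      Finset.sum_ite_eq]
  have hπx : ∀ x : Fin n → R, π x = ∑ i, x i • s i := by
    intro x
    conv_lhs => rw [← hsingle x]
    rw [map_sum]
    simp [hs]
  -- the injective module E containing N
  set E : ModuleCat.{u} R := Injective.under (ModuleCat.of R N) with hE
  set e : ModuleCat.of R N ⟶ E := Injective.ι (ModuleCat.of R N) with he
  have einj : Function.Injective e := (ModuleCat.mono_iff_injective e).1 inferInstance
  have hEinj : Module.Injective R ↑E :=
    Module.injective_module_of_injective_object R ↑E (inj := (inferInstance : Injective E))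
  have hpiInj : Module.Injective R (Fin n → ↑E) := moduleInjective_pi hEinj
  letI : Injective (ModuleCat.of R (Fin n → ↑E)) :=
    Module.injective_object_of_injective_module R (Fin n → ↑E) (inj := hpiInj)
  -- the embedding ε : Hom(M, N) → N^n
  set ε : (M →ₗ[R] N) →ₗ[R] (Fin n → N) :=
    { toFun := fun f => fun i => f (s i)
      map_add' := fun f g => funext fun i => rfl
      map_smul' := fun r f => funext fun i => rfl } with hε
  have hεinj : Function.Injective ε := by
    intro f g hfg
    have hfg' : ∀ i, f (s i) = g (s i) := fun i => congrFun hfg i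
    apply LinearMap.ext
    intro m
    obtain ⟨x, rfl⟩ := hπ m
    rw [hπx x, map_sum, map_sum]
    simp only [map_smul, hfg']
  set j : (Fin n → N) →ₗ[R] (Fin n → ↑E) :=
    LinearMap.pi (fun i => LinearMap.comp e.hom (LinearMap.proj i))
    with hj
  have hjval : ∀ (v : Fin n → N) (i : Fin n), j v i = e (v i) := fun v i => rfl
  have hjinj : Function.Injective j := by
    intro v v' h
    exact funext fun i => einj (by rw [← hjval, ← hjval, h])
  set a : (M →ₗ[R] N) →ₗ[R] (Fin n → ↑E) := j.comp ε with ha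
  have hainj : Function.Injective a := by
    intro f g h
    exact hεinj (hjinj h)
  set aHom : ModuleCat.of R (M →ₗ[R] N) ⟶ ModuleCat.of R (Fin n → ↑E) := ModuleCat.ofHom a
    with haHom
  haveI : Mono aHom := (ModuleCat.mono_iff_injective _).2 hainj
  set I : InjectiveResolution (ModuleCat.of R (M →ₗ[R] N)) := Aux1.resOf aHom with hI
  -- the kernel of π and the map ρ
  set K := LinearMap.ker π with hK
  set lc : (Fin n → N) →ₗ[R] ((Fin n → R) →ₗ[R] N) :=
    { toFun := fun v => Fintype.linearCombination R v
      map_add' := fun v v' => LinearMap.ext fun x => by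
        simp [Fintype.linearCombination_apply, Finset.sum_add_distrib]
      map_smul' := fun r v => LinearMap.ext fun x => by
        simp only [RingHom.id_apply, LinearMap.smul_apply, LinearMap.coe_mk, AddHom.coe_mk,
          Fintype.linearCombination_apply, Pi.smul_apply, Finset.smul_sum, smul_comm r] } with hlc
  set ρ : (Fin n → N) →ₗ[R] (↥K →ₗ[R] N) := (LinearMap.lcomp R N K.subtype).comp lc with hρ
  have hρval : ∀ (g : Fin n → N) (k : ↥K), ρ g k = ∑ i, (k : Fin n → R) i • g i := by
    intro g k
    simp [hρ, hlc, Fintype.linearCombination_apply]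
  have hρε : ∀ f : M →ₗ[R] N, ρ (ε f) = 0 := by
    intro f
    apply LinearMap.ext
    intro k
    rw [hρval]
    have : ∑ i, (k : Fin n → R) i • (ε f) i = f (π (k : Fin n → R)) := by
      rw [hπx, map_sum]
      simp only [map_smul, hε]
      rfl
    rw [this, (LinearMap.mem_ker.1 k.2 : π (k : Fin n → R) = 0), map_zero]
    rfl
  have hρker : ∀ v : Fin n → N, ρ v = 0 → ∃ f : M →ₗ[R] N, ε f = v := by
    intro v hv
    have hKv : K ≤ LinearMap.ker (lc v) := by
      intro k hk
      rw [LinearMap.mem_ker]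
      have := LinearMap.congr_fun hv ⟨k, hk⟩
      rw [hρval] at this
      simpa [hlc, Fintype.linearCombination_apply] using this
    set ψ := π.quotKerEquivOfSurjective hπ with hψ
    have hψmk : ∀ x : Fin n → R, ψ (Submodule.Quotient.mk x) = π x := by
      intro x
      simp [hψ, LinearMap.quotKerEquivOfSurjective]
    set f := (K.liftQ (lc v) hKv).comp (ψ.symm : M →ₗ[R] (Fin n → R) ⧸ K) with hf
    refine ⟨f, funext fun i => ?_⟩
    have h1' : ψ.symm (s i) = Submodule.Quotient.mk (Pi.single i 1) := by
      rw [LinearEquiv.symm_apply_eq, hψmk]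
    have : ε f i = f (s i) := rfl
    rw [this, hf]
    simp only [LinearMap.comp_apply, LinearEquiv.coe_coe, h1', Submodule.liftQ_apply]
    simp [hlc, Fintype.linearCombination_apply, Pi.single_apply]
  -- now the homological part
  rw [subsingleton_HZ_iff _ I 1, cochain_exactAt_one_iff]
  intro x hx
  have hx2 : I.cocomplex.d 1 2 x.1 = 0 := congrArg Subtype.val hx
  obtain ⟨yy, hyy⟩ := (ShortComplex.moduleCat_exact_iff _).1 (I.exact_succ 0) x.1 hx2
  let y : Fin n → ↑E := yy
  have hy : I.cocomplex.d 0 1 y = x.1 := hyy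
  have hι : I.ι.f 0 = aHom := Aux1.resOf_ι_f_zero aHom
  have hcomp : ∀ f : M →ₗ[R] N, I.cocomplex.d 0 1 (a f) = 0 := by
    intro f
    have hcc : aHom ≫ I.cocomplex.d 0 1 = 0 := by rw [← hι]; exact I.ι_f_zero_comp_complex_d
    exact LinearMap.congr_fun (congrArg ModuleCat.Hom.hom hcc) f
  have hker0 : ∀ z : Fin n → ↑E, I.cocomplex.d 0 1 z = 0 → ∃ f : M →ₗ[R] N, a f = z := by
    intro z hz
    obtain ⟨f, hf⟩ := (ShortComplex.moduleCat_exact_iff _).1 I.exact₀ z hz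
    have hf' : I.ι.f 0 f = z := hf
    rw [hι] at hf'
    exact ⟨f, hf'⟩
  set QA := (Fin n → ↑E) ⧸ LinearMap.range a with hQA
  have hqA : (Submodule.Quotient.mk y : QA) ∈ torsionZ R Z QA := by
    refine mem_torsionZ_of_ann_le x.2 ?_
    intro r hr
    rw [← Submodule.Quotient.mk_smul, Submodule.Quotient.mk_eq_zero]
    have hd : I.cocomplex.d 0 1 (r • y) = 0 := by
      exact (map_smul (I.cocomplex.d 0 1).hom r y).trans
        ((congrArg (r • ·) hy).trans hr)
    exact hker0 _ hd
  -- the components of y in E/N are torsion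
  have hti : ∀ i : Fin n, (Submodule.Quotient.mk (y i) : ↑E ⧸ LinearMap.range e.hom)
      ∈ torsionZ R Z (↑E ⧸ LinearMap.range e.hom) := by
    intro i
    set μ : (Fin n → ↑E) →ₗ[R] (↑E ⧸ LinearMap.range e.hom) :=
      (Submodule.mkQ (LinearMap.range e.hom)).comp (LinearMap.proj i) with hμ
    have hle : LinearMap.range a ≤ LinearMap.ker μ := by
      rintro _ ⟨f, rfl⟩
      rw [LinearMap.mem_ker, hμ]
      have : a f i = e (ε f i) := hjval (ε f) i
      simp only [LinearMap.comp_apply, LinearMap.proj_apply, this]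
      rw [Submodule.mkQ_apply, Submodule.Quotient.mk_eq_zero]
      exact ⟨ε f i, rfl⟩
    have := torsionZ_map_mem R Z (Submodule.liftQ _ μ hle) _ hqA
    rw [Submodule.liftQ_apply] at this
    simpa [hμ] using this
  have hlift : ∀ i : Fin n, ∃ w : ↑E, w ∈ torsionZ R Z ↑E ∧
      (Submodule.Quotient.mk w : ↑E ⧸ LinearMap.range e.hom) = Submodule.Quotient.mk (y i) :=
    fun i => h1_lift E e h1 _ (hti i)
  choose w hw1 hw2 using hlift
  have hwt : w ∈ torsionZ R Z (Fin n → ↑E) := pi_mem_torsionZ hw1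
  have hwy : ∀ i, w i - y i ∈ LinearMap.range e.hom :=
    fun i => (Submodule.Quotient.eq _).1 (hw2 i)
  choose uu huu using hwy
  have hwyj : w - y = j uu := funext fun i => by
    rw [hjval, huu]
    rfl
  have hmkw : (Submodule.Quotient.mk w : QA) ∈ torsionZ R Z QA :=
    torsionZ_map_mem R Z (Submodule.mkQ _) w hwt
  have hc : (Submodule.Quotient.mk (y - w) : QA) ∈ torsionZ R Z QA := by
    have hsub : (Submodule.Quotient.mk (y - w) : QA)
        = Submodule.Quotient.mk y - Submodule.Quotient.mk w := rfl
    rw [hsub]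
    exact Submodule.sub_mem _ hqA hmkw
  have hjneg : j (-uu) = y - w := by
    rw [map_neg, ← hwyj, neg_sub]
  have hρu : ρ (-uu) ∈ torsionZ R Z (↥K →ₗ[R] N) := by
    refine mem_torsionZ_of_ann_le hc ?_
    intro r hr
    rw [← Submodule.Quotient.mk_smul, Submodule.Quotient.mk_eq_zero] at hr
    obtain ⟨f, hf⟩ := hr
    have hjj : j (r • (-uu)) = j (ε f) := by
      rw [map_smul, hjneg, ← hf]
      rfl
    have h2 : r • (-uu) = ε f := hjinj hjj
    rw [← map_smul, h2, hρε f]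
  have hρ0 : ρ (-uu) = 0 := by
    rw [torsionZ_hom_eq_bot hN0] at hρu
    simpa using hρu
  obtain ⟨f, hf⟩ := hρker (-uu) hρ0
  have hyw : y - w ∈ LinearMap.range a := ⟨f, by rw [ha, LinearMap.comp_apply, hf, hjneg]⟩
  have hdw : I.cocomplex.d 0 1 w = x.1 := by
    obtain ⟨f', hf'⟩ := hyw
    have h3 : I.cocomplex.d 0 1 (y - w) = 0 := by rw [← hf']; exact hcomp f'
    exact (sub_eq_zero.1 ((map_sub (I.cocomplex.d 0 1).hom y w).symm.trans h3)).symm.trans hy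
  exact ⟨⟨w, hwt⟩, Subtype.ext hdw⟩

end Aux3

end Aux1

/-- `gr_R(Z, Hom_R(M, N)) ≥ min { 2, gr_R(Z, N) }`. -/
theorem min_two_gradeZ_le_gradeZ_hom (R : Type u) [CommRing R] [IsNoetherianRing R]
    (Z : Set (PrimeSpectrum R)) (hZ : IsSpecClosed R Z)
    (M N : Type u) [AddCommGroup M] [Module R M] [Module.Finite R M]
    [AddCommGroup N] [Module R N] :
    min 2 (gradeZ R Z N) ≤ gradeZ R Z (M →ₗ[R] N) := by
  have key : ∀ k : ℕ, Nontrivial (HZ R Z k (M →ₗ[R] N)) → min 2 (gradeZ R Z N) ≤ (k : ℕ∞) := by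
    intro k hk
    match k with
    | 0 =>
      have hN : Nontrivial (HZ R Z 0 N) := by
        rw [← not_subsingleton_iff_nontrivial] at hk ⊢
        intro hs
        apply hk
        rw [subsingleton_HZ_zero_iff] at hs ⊢
        exact torsionZ_hom_eq_bot hs
      have hle : gradeZ R Z N ≤ ((0 : ℕ) : ℕ∞) := sInf_le ⟨0, rfl, hN⟩
      refine le_trans (min_le_right _ _) (le_trans hle (by simp))
    | 1 =>
      by_cases hg : gradeZ R Z N ≤ 1
      · exact le_trans (min_le_right _ _) (le_trans hg (by norm_num))
      · exfalso
        push_neg at hg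
        have h0 : Subsingleton (HZ R Z 0 N) := by
          by_contra hs
          have h' : gradeZ R Z N ≤ ((0 : ℕ) : ℕ∞) :=
            sInf_le ⟨0, rfl, not_subsingleton_iff_nontrivial.1 hs⟩
          have hc : (1 : ℕ∞) < ((0 : ℕ) : ℕ∞) := lt_of_lt_of_le hg h'
          norm_num at hc
        have h1 : Subsingleton (HZ R Z 1 N) := by
          by_contra hs
          have h' : gradeZ R Z N ≤ ((1 : ℕ) : ℕ∞) :=
            sInf_le ⟨1, rfl, not_subsingleton_iff_nontrivial.1 hs⟩
          have hc : (1 : ℕ∞) < ((1 : ℕ) : ℕ∞) := lt_of_lt_of_le hg h'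
          norm_num at hc
        exact (not_subsingleton_iff_nontrivial.2 hk) (subsingleton_HZ_one_hom M N h0 h1)
    | (m+2) =>
      refine le_trans (min_le_left _ _) ?_
      have : ((2 : ℕ) : ℕ∞) ≤ ((m + 2 : ℕ) : ℕ∞) := by
        exact_mod_cast Nat.le_add_left 2 m
      simpa using this
  refine le_sInf ?_
  rintro i ⟨k, rfl, hk⟩
  exact key k hk
end

section
/- Let (R, m) be a commutative Noetherian local ring with depth R ≥ 1 and let I be an m-primary ideal with the property: whenever X is a finitely generated R-module and Tor_t^R(X, R/I) = 0 for some integer t ≥ 0, then pd_R(X) < t. Then H^1_m(M ⊗_R I) ≠ 0 for every nonzero finitely generated R-module M that is locally free on the punctured spectrum of R and has depth_R(M) ≥ 1. -/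
/-! Common definitions: local cohomology with respect to specialization-closed subsets,
depth, grade, homological dimensions, Tate homology, etc. -/

open CategoryTheory

universe u

/-! ### Auxiliary lemmas for the proof -/

section Aux

open IsLocalRing

variable {R : Type u} [CommRing R] [IsLocalRing R]

lemma mem_torsion_iff {M : Type u} [AddCommGroup M] [Module R M] (x : M) :
    x ∈ torsionZ R (maxSet R) M ↔
      ∀ a ∈ maximalIdeal R, ∃ n : ℕ, a ^ n • x = 0 := by
  constructor
  · intro hx a ha
    have hrad : a ∈ ((R ∙ x).annihilator).radical := by
      rw [Ideal.radical_eq_sInf]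
      refine Ideal.mem_sInf.2 ?_
      rintro J ⟨hJ1, hJ2⟩
      exact hx ⟨J, hJ2⟩ hJ1 ha
    obtain ⟨n, hn⟩ := hrad
    exact ⟨n, (Submodule.mem_annihilator_span_singleton _ _).1 hn⟩
  · intro h p hp a ha
    obtain ⟨n, hn⟩ := h a ha
    have hmem : a ^ n ∈ p.asIdeal :=
      hp ((Submodule.mem_annihilator_span_singleton _ _).2 hn)
    exact p.isPrime.mem_of_pow_mem _ hmem

lemma exists_regular_of_depth_one {M : Type u} [AddCommGroup M] [Module R M]
    (h : 1 ≤ moduleDepth R M) :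
    ∃ r ∈ maximalIdeal R, IsSMulRegular M r := by
  by_contra hc
  push_neg at hc
  have hle : moduleDepth R M ≤ 0 := by
    refine sSup_le ?_
    rintro n ⟨rs, hlen, hmem, hreg⟩
    match rs, hlen with
    | [], hlen => simp at hlen; simp [← hlen]
    | r :: rs', hlen =>
      exact absurd (((RingTheory.Sequence.isWeaklyRegular_cons_iff M r rs').1 hreg).1)
        (hc r (hmem r (by simp)))
  exact absurd (h.trans hle) (by simp)

lemma eq_zero_of_torsion_of_depth {M : Type u} [AddCommGroup M] [Module R M]
    (h : 1 ≤ moduleDepth R M) (x : M)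
    (hx : x ∈ torsionZ R (maxSet R) M) : x = 0 := by
  obtain ⟨r, hr, hreg⟩ := exists_regular_of_depth_one h
  obtain ⟨n, hn⟩ := (mem_torsion_iff x).1 hx r hr
  exact (hreg.pow n) (by simpa using hn)

end Aux
section Aux2

open IsLocalRing

variable {R : Type u} [CommRing R] [IsLocalRing R] [IsNoetherianRing R]

/-- Uniform annihilation: a f.g. torsion submodule is killed by a power of `m`. -/
lemma exists_pow_smul_eq_zero_of_torsion {E : Type u} [AddCommGroup E] [Module R E]
    (N : Submodule R E) (hN : N.FG)
    (hNt : ∀ y ∈ N, y ∈ torsionZ R (maxSet R) E) :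
    ∃ n : ℕ, ∀ y ∈ N, ∀ c ∈ (maximalIdeal R) ^ n, c • y = 0 := by
  obtain ⟨t, ht⟩ := hN
  have key : ∀ y : E, y ∈ (t : Set E) → ∃ n : ℕ, (maximalIdeal R) ^ n ≤ (R ∙ y).annihilator := by
    intro y hy
    have hyt : y ∈ torsionZ R (maxSet R) E := hNt y (ht ▸ Submodule.subset_span hy)
    have hrad : maximalIdeal R ≤ ((R ∙ y).annihilator).radical := by
      intro a ha
      obtain ⟨n, hn⟩ := (mem_torsion_iff y).1 hyt a ha
      exact ⟨n, (Submodule.mem_annihilator_span_singleton _ _).2 hn⟩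
    exact Ideal.exists_pow_le_of_le_radical_of_fg hrad
      (IsNoetherian.noetherian (maximalIdeal R))
  choose! f hf using key
  refine ⟨t.sup f, ?_⟩
  have hallt : ∀ y ∈ (t : Set E), ∀ c ∈ (maximalIdeal R) ^ t.sup f, c • y = 0 := by
    intro y hy c hc
    have h1 : (maximalIdeal R) ^ t.sup f ≤ (maximalIdeal R) ^ f y :=
      Ideal.pow_le_pow_right (Finset.le_sup hy)
    exact (Submodule.mem_annihilator_span_singleton _ _).1 (hf y hy (h1 hc))
  intro y hy c hc
  rw [← ht] at hy
  induction hy using Submodule.span_induction with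
  | mem z hz => exact hallt z hz c hc
  | zero => simp
  | add a b _ _ ha hb => rw [smul_add, ha, hb, add_zero]
  | smul r a _ ha => rw [smul_comm, ha, smul_zero]

/-- The torsion part of an injective module is injective (via Baer + Artin–Rees). -/
lemma module_injective_torsion (E : Type u) [AddCommGroup E] [Module R E]
    (hE : Module.Injective R E) :
    Module.Injective R (torsionZ R (maxSet R) E) := by
  classical
  set m : Ideal R := maximalIdeal R with hm
  refine Module.Baer.injective ?_
  intro J g
  set gE : ↥J →ₗ[R] E := (torsionZ R (maxSet R) E).subtype ∘ₗ g with hgE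
  have hfg : (LinearMap.range gE).FG := by
    have h0 : (⊤ : Submodule R ↥J).FG := IsNoetherian.noetherian _
    simpa [Submodule.map_top] using h0.map gE
  obtain ⟨n, hn⟩ := exists_pow_smul_eq_zero_of_torsion (LinearMap.range gE) hfg
    (by rintro y ⟨x, rfl⟩; exact (g x).2)
  obtain ⟨k, hk⟩ := Ideal.exists_pow_inf_eq_pow_smul m (J : Submodule R R)
  have hAR : (m ^ (k + n) : Ideal R) ⊓ (J : Submodule R R) ≤ m ^ n • (J : Submodule R R) := by
    have h1 := hk (k + n) (by omega)
    have h2 : (m ^ (k+n) : Ideal R) • (⊤ : Submodule R R) = (m ^ (k+n) : Ideal R) := by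
      rw [Ideal.smul_eq_mul, Ideal.mul_top]
    have h3 : (m ^ k : Ideal R) • (⊤ : Submodule R R) = (m ^ k : Ideal R) := by
      rw [Ideal.smul_eq_mul, Ideal.mul_top]
    rw [h2, h3] at h1
    rw [h1, show k + n - k = n from by omega]
    exact Submodule.smul_mono le_rfl inf_le_right
  have hvanish : ∀ (x : R) (hx : x ∈ J), x ∈ (m ^ (k + n) : Ideal R) → gE ⟨x, hx⟩ = 0 := by
    have main : ∀ (x : R) (hx : x ∈ m ^ n • (J : Submodule R R)),
        ∀ hxJ : x ∈ J, gE ⟨x, hxJ⟩ = 0 := by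
      intro x hx
      induction hx using Submodule.smul_induction_on' with
      | smul c hc z hz =>
        intro hmem
        have hz' : (⟨c • z, hmem⟩ : ↥J) = c • ⟨z, hz⟩ := rfl
        rw [hz', map_smul]
        exact hn _ ⟨⟨z, hz⟩, rfl⟩ c hc
      | add a ha b hb iha ihb =>
        intro hmem
        have haJ : a ∈ J := Submodule.smul_le_right (N := (J : Submodule R R)) ha
        have hbJ : b ∈ J := Submodule.smul_le_right (N := (J : Submodule R R)) hb
        have : (⟨a + b, hmem⟩ : ↥J) = ⟨a, haJ⟩ + ⟨b, hbJ⟩ := rfl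
        rw [this, map_add, iha haJ, ihb hbJ, add_zero]
    intro x hx hx'
    exact main x (hAR ⟨hx', hx⟩) hx
  set K' : Ideal R := m ^ (k + n) with hK'
  set θ : ↥J →ₗ[R] R ⧸ K' := K'.mkQ ∘ₗ J.subtype with hθ
  set Kq : Submodule R ↥J := LinearMap.ker θ with hKq
  have hker : Kq ≤ LinearMap.ker gE := by
    intro x hx
    have hxK : (x : R) ∈ K' := by
      have h0 : θ x = 0 := hx
      rw [hθ] at h0
      simp only [LinearMap.comp_apply, Submodule.mkQ_apply, Submodule.coe_subtype] at h0
      exact (Submodule.Quotient.mk_eq_zero _).1 h0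
    exact hvanish x.1 x.2 hxK
  set g1 : (↥J ⧸ Kq) →ₗ[R] E := Kq.liftQ gE hker with hg1
  set ι1 : (↥J ⧸ Kq) →ₗ[R] R ⧸ K' := Kq.liftQ θ le_rfl with hι1def
  have hι1 : Function.Injective ι1 := by
    rw [← LinearMap.ker_eq_bot]
    exact Submodule.ker_liftQ_eq_bot' Kq θ rfl
  obtain ⟨H, hH⟩ := hE.out ι1 hι1 g1
  set y₀ : E := H (Submodule.Quotient.mk 1) with hy₀
  have hy₀J : ∀ x : ↥J, (x : R) • y₀ = gE x := by
    intro x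
    have h1 : (x : R) • (Submodule.Quotient.mk 1 : R ⧸ K') = θ x := by
      show _ = Submodule.Quotient.mk _
      rw [← Submodule.Quotient.mk_smul]
      simp
    calc (x : R) • y₀ = H ((x : R) • (Submodule.Quotient.mk 1 : R ⧸ K')) :=
          (map_smul H _ _).symm
      _ = H (ι1 (Submodule.Quotient.mk x)) := by rw [h1, hι1def, Submodule.liftQ_apply]
      _ = g1 (Submodule.Quotient.mk x) := hH _
      _ = gE x := Submodule.liftQ_apply _ _ _
  have hy₀t : y₀ ∈ torsionZ R (maxSet R) E := by
    rw [mem_torsion_iff]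
    intro a ha
    refine ⟨k + n, ?_⟩
    have haK : a ^ (k + n) ∈ K' := Ideal.pow_mem_pow ha _
    have hz : (a ^ (k + n)) • (Submodule.Quotient.mk 1 : R ⧸ K') = 0 := by
      rw [← Submodule.Quotient.mk_smul, smul_eq_mul, mul_one]
      rwa [Submodule.Quotient.mk_eq_zero]
    rw [hy₀, ← map_smul, hz, map_zero]
  refine ⟨LinearMap.codRestrict _ (LinearMap.toSpanSingleton R E y₀)
    (fun r => Submodule.smul_mem _ r hy₀t), ?_⟩
  intro x hx
  apply Subtype.ext
  show x • y₀ = (g ⟨x, hx⟩ : E)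
  exact hy₀J ⟨x, hx⟩

end Aux2
section Aux3

open IsLocalRing TensorProduct

variable {R : Type u} [CommRing R] [IsLocalRing R]

/-- The multiplication map `M ⊗ I → M`. -/
noncomputable def qmap (M : Type u) [AddCommGroup M] [Module R M] (I : Ideal R) :
    TensorProduct R M ↥I →ₗ[R] M :=
  (TensorProduct.rid R M).toLinearMap ∘ₗ (LinearMap.lTensor M I.subtype)

lemma qmap_tmul (M : Type u) [AddCommGroup M] [Module R M] (I : Ideal R)
    (x : M) (i : ↥I) : qmap M I (x ⊗ₜ i) = (i : R) • x := by
  simp [qmap]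

set_option synthInstance.maxHeartbeats 200000 in
/-- The kernel of `M ⊗ I → M` is torsion when `M` is locally free on the
punctured spectrum. -/
lemma ker_qmap_torsion (M : Type u) [AddCommGroup M] [Module R M] [Module.Finite R M]
    (hMfree : LocFreeOnPunctured R M) (I : Ideal R)
    (x : TensorProduct R M ↥I) (hx : qmap M I x = 0) :
    x ∈ torsionZ R (maxSet R) (TensorProduct R M ↥I) := by
  have key : ∀ p : PrimeSpectrum R, p.asIdeal ≠ maximalIdeal R →
      ∃ s ∈ p.asIdeal.primeCompl, s • x = 0 := by
    intro p hp
    haveI := p.2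
    set S := p.asIdeal.primeCompl
    set A := Localization.AtPrime p.asIdeal with hA
    -- `A ⊗ M` is free over `A`, hence flat over `R`
    haveI hfreeAM : Module.Free A (TensorProduct R A M) := by
      have e := (IsLocalizedModule.isBaseChange S A
        (LocalizedModule.mkLinearMap S M)).equiv
      haveI := hMfree p hp
      exact Module.Free.of_equiv e.symm
    haveI : Module.Flat A (TensorProduct R A M) := inferInstance
    haveI : Module.Flat R (TensorProduct R A M) := Module.Flat.trans R A (TensorProduct R A M)
    -- the map `lTensor (A ⊗ M) I.subtype` is injective
    have hinj0 : Function.Injective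
        (LinearMap.lTensor (TensorProduct R A M) I.subtype) :=
      Module.Flat.lTensor_preserves_injective_linearMap _ I.injective_subtype
    -- transfer along associativity
    have hcomm : (LinearMap.lTensor A (LinearMap.lTensor M I.subtype)) ∘ₗ
        (TensorProduct.assoc R A M ↥I).toLinearMap =
        (TensorProduct.assoc R A M R).toLinearMap ∘ₗ
          (LinearMap.lTensor (TensorProduct R A M) I.subtype) := by
      apply TensorProduct.ext_threefold
      intro a m i
      simp
    have hinj1 : Function.Injective (LinearMap.lTensor A (LinearMap.lTensor M I.subtype)) := by
      intro z w hzw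
      set α := TensorProduct.assoc R A M ↥I
      have h1 := LinearMap.congr_fun hcomm (α.symm z)
      have h2 := LinearMap.congr_fun hcomm (α.symm w)
      simp only [LinearMap.comp_apply, LinearEquiv.coe_toLinearMap,
        LinearEquiv.apply_symm_apply] at h1 h2
      have h3 : (TensorProduct.assoc R A M R)
          ((LinearMap.lTensor (TensorProduct R A M) I.subtype) (α.symm z)) =
          (TensorProduct.assoc R A M R)
          ((LinearMap.lTensor (TensorProduct R A M) I.subtype) (α.symm w)) := by
        rw [← h1, ← h2, hzw]
      have h4 := hinj0 ((TensorProduct.assoc R A M R).injective h3)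
      calc z = α (α.symm z) := (α.apply_symm_apply z).symm
        _ = α (α.symm w) := by rw [h4]
        _ = w := α.apply_symm_apply w
    -- injectivity of `lTensor A (rid)`
    have hrid : ((TensorProduct.rid R M).symm.toLinearMap ∘ₗ
        (TensorProduct.rid R M).toLinearMap) = LinearMap.id := by
      ext y; simp
    have hinj2 : Function.Injective
        (LinearMap.lTensor A (TensorProduct.rid R M).toLinearMap) := by
      intro z w hzw
      have := congrArg (LinearMap.lTensor A (TensorProduct.rid R M).symm.toLinearMap) hzw
      rwa [← LinearMap.comp_apply, ← LinearMap.comp_apply, ← LinearMap.lTensor_comp,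
        hrid, LinearMap.lTensor_id, LinearMap.id_apply, LinearMap.id_apply] at this
    -- hence `lTensor A (qmap)` is injective
    have hinjq : Function.Injective (LinearMap.lTensor A (qmap M I)) := by
      rw [qmap, LinearMap.lTensor_comp]
      exact hinj2.comp hinj1
    -- conclude
    have hvan : (LinearMap.lTensor A (qmap M I)) ((1 : A) ⊗ₜ x) = 0 := by
      rw [LinearMap.lTensor_tmul, hx, tmul_zero]
    have h0 : (1 : A) ⊗ₜ[R] x = (0 : TensorProduct R A (TensorProduct R M ↥I)) :=
      hinjq (by simpa using hvan)
    have b := IsLocalizedModule.isBaseChange S A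
      (LocalizedModule.mkLinearMap S (TensorProduct R M ↥I))
    have hb : b.equiv ((1 : A) ⊗ₜ[R] x) = LocalizedModule.mk x 1 := by
      simpa using b.equiv_tmul (1 : A) x
    have hmk : LocalizedModule.mk x (1 : S) = 0 := by
      rw [← hb, h0, map_zero]
    rw [← LocalizedModule.zero_mk (1 : S), LocalizedModule.mk_eq] at hmk
    obtain ⟨u, hu⟩ := hmk
    refine ⟨u, u.2, ?_⟩
    simpa [Submonoid.smul_def] using hu
  intro p hp
  by_cases hpm : p.asIdeal = maximalIdeal R
  · show maximalIdeal R ≤ p.asIdeal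
    rw [hpm]
  · obtain ⟨s, hs, hsx⟩ := key p hpm
    exact absurd (hp ((Submodule.mem_annihilator_span_singleton _ _).2 hsx)) hs

end Aux3
section Aux4

open IsLocalRing

variable {R : Type u} [CommRing R] [IsLocalRing R]

/-- Key homological lemma: if `N ↪ E` with `E` injective, and there is a torsion class in
`E ⧸ N` which is not the image of a torsion element of `E`, then `H¹_m(N) ≠ 0`. -/
lemma nontrivial_H1 (N : Type u) [AddCommGroup N] [Module R N]
    (E : Type u) [AddCommGroup E] [Module R E] (hE : Module.Injective R E)
    (j : N →ₗ[R] E) (hj : Function.Injective j)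
    (c : E ⧸ LinearMap.range j)
    (hc : c ∈ torsionZ R (maxSet R) (E ⧸ LinearMap.range j))
    (hnl : ∀ g : E, g ∈ torsionZ R (maxSet R) E → Submodule.Quotient.mk g ≠ c) :
    Nontrivial (HZ R (maxSet R) 1 N) := by
  classical
  let CC : ModuleCat.{u} R := ModuleCat.of R (E ⧸ LinearMap.range j)
  let EC : ModuleCat.{u} R := ModuleCat.of R E
  haveI : Injective EC := Module.injective_object_of_injective_module R E (inj := hE)
  let J : InjectiveResolution CC := InjectiveResolution.of CC
  let π : EC ⟶ CC := ModuleCat.ofHom (LinearMap.range j).mkQ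
  let ι₀ : CC ⟶ J.cocomplex.X 0 := J.ι.f 0
  have hι₀d : ι₀ ≫ J.cocomplex.d 0 1 = 0 := J.ι_f_zero_comp_complex_d
  have hι₀mono : Function.Injective ι₀ := by
    have h : Mono (J.ι.f 0) := inferInstance
    exact (ModuleCat.mono_iff_injective _).1 h
  -- the spliced cochain complex
  let Xc : ℕ → ModuleCat.{u} R := fun n => match n with
    | 0 => EC
    | (n+1) => J.cocomplex.X n
  let dc : ∀ n, Xc n ⟶ Xc (n+1) := fun n => match n with
    | 0 => π ≫ ι₀
    | (n+1) => J.cocomplex.d n (n+1)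
  have hdd : ∀ n, dc n ≫ dc (n+1) = 0 := by
    intro n
    match n with
    | 0 =>
      show (π ≫ ι₀) ≫ J.cocomplex.d 0 1 = 0
      rw [Category.assoc, hι₀d, Limits.comp_zero]
    | (n+1) => exact J.cocomplex.d_comp_d _ _ _
  let cplx := CochainComplex.of (α := ℕ) (V := ModuleCat.{u} R) Xc dc hdd
  have hd01 : cplx.d 0 1 = π ≫ ι₀ := CochainComplex.of_d _ _ 0
  have hd12 : cplx.d 1 2 = J.cocomplex.d 0 1 := CochainComplex.of_d _ _ 1
  have hjd : ModuleCat.ofHom j ≫ cplx.d 0 1 = 0 := by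
    rw [hd01]
    ext x
    show ι₀ (π (j x)) = 0
    have h0 : π (j x) = 0 := by
      show Submodule.Quotient.mk (j x) = 0
      rw [Submodule.Quotient.mk_eq_zero]
      exact ⟨x, rfl⟩
    rw [h0, map_zero]
  let resι := (CochainComplex.fromSingle₀Equiv cplx (ModuleCat.of R N)).symm
      ⟨ModuleCat.ofHom j, hjd⟩
  have hresι0 : resι.f 0 = ModuleCat.ofHom j :=
    CochainComplex.fromSingle₀Equiv_symm_apply_f_zero _ _
  -- exactness of `N → E → J⁰`
  have hexact0 : (ShortComplex.mk (ModuleCat.ofHom j) (cplx.d 0 1) hjd).Exact := by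
    rw [ShortComplex.moduleCat_exact_iff]
    intro x hx
    have hx' : ι₀ (π x) = 0 := by
      have h := ConcreteCategory.congr_hom hd01 x
      exact h ▸ hx
    have hπx : π x = 0 := by
      rw [← map_zero ι₀.hom] at hx'
      exact hι₀mono hx'
    have : x ∈ LinearMap.range j := by
      rwa [← Submodule.Quotient.mk_eq_zero]
    obtain ⟨y, hy⟩ := this
    exact ⟨y, hy⟩
  -- the injective resolution of `N`
  let res : InjectiveResolution (ModuleCat.of R N) := {
    cocomplex := cplx
    injective := fun n => by
      match n with
      | 0 => exact inferInstanceAs (Injective EC)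
      | (n+1) => exact J.injective n
    hasHomology := fun i => inferInstance
    ι := resι
    quasiIso := ⟨fun n => by
      cases n with
      | zero =>
        rw [CochainComplex.quasiIsoAt₀_iff, ShortComplex.quasiIso_iff_of_zeros]
        · refine (ShortComplex.exact_and_mono_f_iff_of_iso ?_).2
            ⟨hexact0, (ModuleCat.mono_iff_injective _).2 hj⟩
          exact ShortComplex.isoMk (Iso.refl _) (Iso.refl _) (Iso.refl _)
            (by simp [hresι0]; rfl) (by simp; rfl)
        all_goals rfl
      | succ n =>
        rw [quasiIsoAt_iff_exactAt _ _ (CochainComplex.exactAt_succ_single_obj _ _)]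
        rw [cplx.exactAt_iff' n (n+1) (n+1+1) (by simp) (by simp)]
        match n with
        | 0 =>
          rw [ShortComplex.moduleCat_exact_iff]
          intro x hx
          -- x : J.X 0, J.d 0 1 x = 0 (note cplx.d 1 2 = J.d 0 1)
          have hx' : (J.cocomplex.d 0 1) x = 0 := by
            have h := ConcreteCategory.congr_hom hd12 x
            exact h ▸ hx
          have hJ0 := (ShortComplex.moduleCat_exact_iff _).1 J.exact₀
          obtain ⟨y, hy⟩ := hJ0 x hx'
          obtain ⟨w, hw⟩ := Submodule.mkQ_surjective (LinearMap.range j) y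
          refine ⟨w, ?_⟩
          have hval : (cplx.d 0 1) w = ι₀ (π w) := ConcreteCategory.congr_hom hd01 w
          show (cplx.d 0 1) w = x
          rw [hval]
          show ι₀ ((LinearMap.range j).mkQ w) = x
          rw [hw]
          exact hy
        | (m+1) =>
          rw [ShortComplex.moduleCat_exact_iff]
          intro x hx
          have hd23 : cplx.d (m+1+1) (m+1+2) = J.cocomplex.d (m+1) (m+2) :=
            CochainComplex.of_d _ _ (m+2)
          have hx' : (J.cocomplex.d (m+1) (m+2)) x = 0 := by
            have h := ConcreteCategory.congr_hom hd23 x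
            exact h ▸ hx
          have hJs := (ShortComplex.moduleCat_exact_iff _).1 (J.exact_succ m)
          obtain ⟨y, hy⟩ := hJs x hx'
          refine ⟨y, ?_⟩
          have hdm : cplx.d (m+1) (m+1+1) = J.cocomplex.d m (m+1) :=
            CochainComplex.of_d _ _ (m+1)
          have h := ConcreteCategory.congr_hom hdm y
          show (cplx.d (m+1) (m+1+1)) y = x
          rw [h]
          exact hy⟩ }
  -- compute `H¹` via this resolution
  let Γ := gammaZ R (maxSet R)
  let mapped := (Γ.mapHomologicalComplex (ComplexShape.up ℕ)).obj cplx
  let iso1 : (HZ R (maxSet R) 1 N) ≅ mapped.homology 1 :=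
    res.isoRightDerivedObj Γ 1
  let iso2 : mapped.homology 1 ≅ (mapped.sc' 0 1 2).homology :=
    ShortComplex.homologyMapIso (mapped.isoSc' 0 1 2 (by simp) (by simp))
  let iso3 := (mapped.sc' 0 1 2).moduleCatHomologyIso
  -- the nontrivial cycle
  have hcyc : Nontrivial ((mapped.sc' 0 1 2).moduleCatLeftHomologyData.H) := by
    have hz₁mem : ι₀ c ∈ torsionZ R (maxSet R) (J.cocomplex.X 0) :=
      torsionZ_map_mem R (maxSet R) ι₀.hom c hc
    let z₁ : (mapped.sc' 0 1 2).X₂ := ⟨ι₀ c, hz₁mem⟩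
    have hz₁ : ((mapped.sc' 0 1 2).g) z₁ = 0 := by
      apply Subtype.ext
      show (cplx.d 1 2) (ι₀ c) = 0
      rw [ConcreteCategory.congr_hom hd12 (ι₀ c)]
      have h0 := ConcreteCategory.congr_hom hι₀d c
      simpa using h0
    refine ⟨Submodule.Quotient.mk ⟨z₁, LinearMap.mem_ker.2 hz₁⟩, 0, ?_⟩
    change (Submodule.Quotient.mk ⟨z₁, LinearMap.mem_ker.2 hz₁⟩ :
      _ ⧸ LinearMap.range (mapped.sc' 0 1 2).moduleCatToCycles) ≠ 0
    rw [ne_eq, Submodule.Quotient.mk_eq_zero]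
    rintro ⟨w, hw⟩
    have hw1 : (cplx.d 0 1) w.1 = ι₀ c :=
      congrArg Subtype.val (congrArg Subtype.val hw)
    rw [ConcreteCategory.congr_hom hd01 w.1] at hw1
    have hπ : π w.1 = c := hι₀mono hw1
    exact hnl w.1 w.2 hπ
  exact Equiv.nontrivial ((iso1 ≪≫ iso2 ≪≫ iso3).toLinearEquiv.toEquiv)

end Aux4
section Aux5

open IsLocalRing

variable {R : Type u} [CommRing R]

/-- Any module embeds into an injective module. -/
lemma exists_injective_embedding (W : Type u) [AddCommGroup W] [Module R W] :
    ∃ (E : Type u) (_ : AddCommGroup E) (_ : Module R E) (f : W →ₗ[R] E),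
      Module.Injective R E ∧ Function.Injective f := by
  let EC : ModuleCat.{u} R := Injective.under (ModuleCat.of R W)
  haveI : Injective (ModuleCat.of R ↥EC) := inferInstanceAs (Injective EC)
  refine ⟨↥EC, inferInstance, inferInstance,
    (Injective.ι (ModuleCat.of R W) : ModuleCat.of R W ⟶ EC).hom, ?_, ?_⟩
  · exact Module.injective_module_of_injective_object R ↥EC
  · exact (ModuleCat.mono_iff_injective
      (Injective.ι (ModuleCat.of R W) : ModuleCat.of R W ⟶ EC)).1 inferInstance

/-- A product of two injective modules is injective. -/
lemma injective_prod {P Q : Type u} [AddCommGroup P] [Module R P] [AddCommGroup Q] [Module R Q]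
    (hP : Module.Injective R P) (hQ : Module.Injective R Q) :
    Module.Injective R (P × Q) := by
  constructor
  intro X Y _ _ _ _ f hf g
  obtain ⟨h₁, hh₁⟩ := hP.out f hf ((LinearMap.fst R P Q) ∘ₗ g)
  obtain ⟨h₂, hh₂⟩ := hQ.out f hf ((LinearMap.snd R P Q) ∘ₗ g)
  refine ⟨LinearMap.prod h₁ h₂, fun x => ?_⟩
  have e1 := hh₁ x
  have e2 := hh₂ x
  simp only [LinearMap.comp_apply, LinearMap.fst_apply, LinearMap.snd_apply] at e1 e2
  simp [LinearMap.prod_apply, e1, e2]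

end Aux5
/-- If `depth R ≥ 1` and `I` is an `m`-primary ideal such that the vanishing
of `Tor_t(X, R/I)` forces `pd X < t` for every finitely generated `X`, then
`H^1_m(M ⊗_R I) ≠ 0` for every nonzero finitely generated `M` of positive depth which is
locally free on the punctured spectrum. -/
theorem localCohomology_one_tensor_ideal_ne_zero (R : Type u) [CommRing R] [IsLocalRing R]
    [IsNoetherianRing R] (hdepth : 1 ≤ moduleDepth R R)
    (I : Ideal R) (hI : I.radical = IsLocalRing.maximalIdeal R)
    (hrigid : ∀ (X : Type u) [AddCommGroup X] [Module R X] [Module.Finite R X] (t : ℕ),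
      Subsingleton (TorMod R t X (R ⧸ I)) → projDim R X < ((t : ℕ∞) : WithBot ℕ∞))
    (M : Type u) [AddCommGroup M] [Module R M] [Module.Finite R M]
    (hMnz : Nontrivial M) (hMfree : LocFreeOnPunctured R M)
    (hMdepth : 1 ≤ moduleDepth R M) :
    Nontrivial (HZ R (maxSet R) 1 (TensorProduct R M I)) := by
  classical
  set q : TensorProduct R M ↥I →ₗ[R] M := qmap M I with hq
  -- `U`: an injective module containing `ker q`; `T`: its torsion part, still injective
  obtain ⟨U, iU1, iU2, uemb, hUinj, huinj⟩ :=
    exists_injective_embedding (R := R) ↥(LinearMap.ker q)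
  letI := iU1; letI := iU2
  set T := torsionZ R (maxSet R) U with hT
  have hTinj : Module.Injective R ↥T := module_injective_torsion U hUinj
  have humem : ∀ x : ↥(LinearMap.ker q), uemb x ∈ T := by
    intro x
    have hxt : (x : TensorProduct R M ↥I) ∈ torsionZ R (maxSet R) (TensorProduct R M ↥I) :=
      ker_qmap_torsion M hMfree I x.1 (LinearMap.mem_ker.1 x.2)
    rw [mem_torsion_iff] at hxt ⊢
    intro a ha
    obtain ⟨n, hn⟩ := hxt a ha
    have hx0 : a ^ n • x = 0 := Subtype.ext hn
    exact ⟨n, by rw [← map_smul, hx0, map_zero]⟩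
  set k₀ : ↥(LinearMap.ker q) →ₗ[R] ↥T := LinearMap.codRestrict T uemb humem with hk₀
  have hk₀inj : Function.Injective k₀ := by
    intro a b h
    exact huinj (congrArg Subtype.val h)
  obtain ⟨kt, hkt⟩ := hTinj.out
    ((LinearMap.ker q).subtype : ↥(LinearMap.ker q) →ₗ[R] TensorProduct R M ↥I)
    (Submodule.injective_subtype (LinearMap.ker q)) k₀
  -- `E₁`: an injective module containing `M`
  obtain ⟨E₁, iE1, iE2, e, hE₁inj, heinj⟩ := exists_injective_embedding (R := R) M
  letI := iE1; letI := iE2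
  have hEinj : Module.Injective R (↥T × E₁) := injective_prod hTinj hE₁inj
  set j : TensorProduct R M ↥I →ₗ[R] ↥T × E₁ := LinearMap.prod kt (e ∘ₗ q) with hj
  have hjinj : Function.Injective j := by
    rw [← LinearMap.ker_eq_bot]
    rw [Submodule.eq_bot_iff]
    intro x hx
    rw [LinearMap.mem_ker] at hx
    have h2 : e (q x) = 0 := congrArg Prod.snd hx
    have hqx : q x = 0 := heinj (by simpa using h2)
    have h1 : kt x = 0 := congrArg Prod.fst hx
    have hxk : x ∈ LinearMap.ker q := LinearMap.mem_ker.2 hqx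
    have h3 : kt ((LinearMap.ker q).subtype ⟨x, hxk⟩) = k₀ ⟨x, hxk⟩ := hkt _
    have h4 : k₀ ⟨x, hxk⟩ = 0 := by
      rw [← h3]
      simpa using h1
    have h5 : (⟨x, hxk⟩ : ↥(LinearMap.ker q)) = 0 := by
      apply hk₀inj
      rw [h4, map_zero]
    simpa using congrArg Subtype.val h5
  -- the range of `q` is `I • M ≠ M` by Nakayama
  have hIm : I ≤ IsLocalRing.maximalIdeal R := hI ▸ Ideal.le_radical
  have hrange : LinearMap.range q = I • (⊤ : Submodule R M) := by
    apply le_antisymm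
    · rintro _ ⟨x, rfl⟩
      induction x using TensorProduct.induction_on with
      | zero => simp
      | tmul mm i => rw [hq, qmap_tmul]; exact Submodule.smul_mem_smul i.2 trivial
      | add a b ha hb => rw [map_add]; exact Submodule.add_mem _ ha hb
    · refine Submodule.smul_le.2 ?_
      intro r hr mm _
      exact ⟨mm ⊗ₜ (⟨r, hr⟩ : ↥I), by rw [hq, qmap_tmul]⟩
  have hne : LinearMap.range q ≠ ⊤ := by
    rw [hrange]
    intro htop
    have hbot : (⊤ : Submodule R M) = ⊥ :=
      Submodule.eq_bot_of_le_smul_of_le_jacobson_bot I ⊤ (IsNoetherian.noetherian _)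
        (by rw [htop])
        (le_trans hIm (IsLocalRing.maximalIdeal_le_jacobson _))
    obtain ⟨x, y, hxy⟩ := hMnz
    apply hxy
    have hx : x ∈ (⊥ : Submodule R M) := hbot ▸ Submodule.mem_top
    have hy : y ∈ (⊥ : Submodule R M) := hbot ▸ Submodule.mem_top
    rw [Submodule.mem_bot] at hx hy
    rw [hx, hy]
  obtain ⟨m₀, hm₀⟩ : ∃ x : M, x ∉ LinearMap.range q := by
    by_contra h
    push_neg at h
    exact hne (Submodule.eq_top_iff'.2 h)
  -- the element `(0, e m₀)` gives a torsion class in `(T × E₁) ⧸ N` not liftable to torsion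
  set v : ↥T × E₁ := (0, e m₀) with hv
  set c : (↥T × E₁) ⧸ LinearMap.range j := Submodule.Quotient.mk v with hc
  have hcmem : c ∈ torsionZ R (maxSet R) ((↥T × E₁) ⧸ LinearMap.range j) := by
    rw [mem_torsion_iff]
    intro a ha
    obtain ⟨t, ht⟩ : ∃ t : ℕ, a ^ t ∈ I := by
      have : a ∈ I.radical := by rw [hI]; exact ha
      exact this
    set x : TensorProduct R M ↥I := m₀ ⊗ₜ (⟨a ^ t, ht⟩ : ↥I) with hx
    have hqx : q x = a ^ t • m₀ := by rw [hq, hx, qmap_tmul]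
    have hsplit : a ^ t • v = j x + (- kt x, 0) := by
      have h1 : (a ^ t • v).1 = (j x + (- kt x, 0)).1 := by
        show a ^ t • (0 : ↥T) = kt x + - kt x
        rw [smul_zero, add_neg_cancel]
      have h2 : (a ^ t • v).2 = (j x + (- kt x, 0)).2 := by
        show a ^ t • e m₀ = e (q x) + 0
        rw [add_zero, hqx, map_smul]
      exact Prod.ext h1 h2
    obtain ⟨nn, hnn⟩ := (mem_torsion_iff ((kt x : U))).1 (kt x).2 a ha
    refine ⟨t + nn, ?_⟩
    have hzero : a ^ nn • ((- kt x, 0) : ↥T × E₁) = 0 := by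
      have hfst : a ^ nn • (- kt x) = (0 : ↥T) := by
        apply Subtype.ext
        show a ^ nn • (-(kt x) : U) = 0
        rw [smul_neg, hnn, neg_zero]
      exact Prod.ext (by simpa using hfst) (by simp)
    have hkey : a ^ (t + nn) • v = a ^ nn • (j x) := by
      rw [pow_add, mul_comm, mul_smul, hsplit, smul_add, hzero, add_zero]
    rw [hc, ← Submodule.Quotient.mk_smul, hkey, Submodule.Quotient.mk_smul]
    have : Submodule.Quotient.mk (p := LinearMap.range j) (j x) = 0 := by
      rw [Submodule.Quotient.mk_eq_zero]
      exact ⟨x, rfl⟩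
    rw [this, smul_zero]
  have hnl : ∀ g : ↥T × E₁, g ∈ torsionZ R (maxSet R) (↥T × E₁) →
      Submodule.Quotient.mk g ≠ c := by
    intro g hg hgc
    have hmem : g - v ∈ LinearMap.range j := (Submodule.Quotient.eq _).1 hgc
    obtain ⟨x, hx⟩ := hmem
    have h2 : e (q x) = g.2 - e m₀ := congrArg Prod.snd hx
    have hg2t : g.2 ∈ torsionZ R (maxSet R) E₁ :=
      torsionZ_map_mem R (maxSet R) (LinearMap.snd R ↥T E₁) g hg
    have hsum : m₀ + q x ∈ torsionZ R (maxSet R) M := by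
      rw [mem_torsion_iff]
      intro a ha
      obtain ⟨nn, hnn⟩ := (mem_torsion_iff g.2).1 hg2t a ha
      refine ⟨nn, heinj ?_⟩
      have hesum : e (m₀ + q x) = g.2 := by
        rw [map_add, h2]
        abel
      rw [map_smul, hesum, hnn, map_zero]
    have hzero : m₀ + q x = 0 := eq_zero_of_torsion_of_depth hMdepth _ hsum
    have : m₀ = q (-x) := by
      rw [map_neg]
      exact eq_neg_of_add_eq_zero_left hzero
    exact hm₀ ⟨-x, this.symm⟩
  exact nontrivial_H1 (TensorProduct R M ↥I) (↥T × E₁) hEinj j hjinj c hcmem hnl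
end

section
/- Let (R, m) be a commutative Noetherian local ring with depth R ≥ 1, let I ≠ m be an m-primary ideal, and set J = (I :_R m). Then H^1_m(J ⊗_R J) ≠ 0. -/
/-! Common definitions: local cohomology with respect to specialization-closed subsets,
depth, grade, homological dimensions, Tate homology, etc. -/

open CategoryTheory

universe u

section NontrivialH1

open CategoryTheory

/-- If for some (equivalently, any) injective module `E` containing `M` there is an
element `ξ` of `E` which is "torsion modulo `M`" but cannot be corrected by a torsion
element of `E` into `M`, then `H^1_Z(M) ≠ 0`. -/
lemma nontrivial_HZ_one_of (R : Type u) [CommRing R] (Z : Set (PrimeSpectrum R))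
    (M : Type u) [AddCommGroup M] [Module R M]
    (h : ∀ (E : ModuleCat.{u} R), Injective E →
      ∀ f : ModuleCat.of R M ⟶ E, Function.Injective f →
      ∃ (ξ : E) (a : Ideal R),
        (∀ p : PrimeSpectrum R, a ≤ p.asIdeal → p ∈ Z) ∧
        (∀ r ∈ a, r • ξ ∈ LinearMap.range f.hom) ∧
        (∀ γ ∈ torsionZ R Z E, ξ - γ ∉ LinearMap.range f.hom)) :
    Nontrivial (HZ R Z 1 M) := by
  classical
  set M' : ModuleCat.{u} R := ModuleCat.of R M with hM'
  let IR : InjectiveResolution M' := InjectiveResolution.of M'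
  let E0 : ModuleCat.{u} R := IR.cocomplex.X 0
  let E1 : ModuleCat.{u} R := IR.cocomplex.X 1
  let d0 : E0 ⟶ E1 := IR.cocomplex.d 0 1
  let f0 : M' ⟶ E0 := IR.ι.f 0
  have hf0 : Function.Injective f0 := (ModuleCat.mono_iff_injective (IR.ι.f 0)).mp inferInstance
  have hexact : LinearMap.range f0.hom = LinearMap.ker d0.hom :=
    (ShortComplex.moduleCat_exact_iff_range_eq_ker _).mp IR.exact₀
  obtain ⟨ξ, a, haZ, hator, hnot⟩ := h E0 (IR.injective 0) f0 hf0
  -- the Γ-image complex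
  let K := ((gammaZ R Z).mapHomologicalComplex (ComplexShape.up ℕ)).obj IR.cocomplex
  let S : ShortComplex (ModuleCat.{u} R) := K.sc' 0 1 2
  -- the cycle
  have hcomp0 : ∀ x : M', d0 (f0 x) = 0 := by
    intro x
    have : f0 ≫ d0 = 0 := IR.ι_f_zero_comp_complex_d
    calc d0 (f0 x) = (f0 ≫ d0) x := rfl
    _ = 0 := by rw [this]; rfl
  have hy0tor : d0 ξ ∈ torsionZ R Z E1 := by
    intro p hp
    refine haZ p (le_trans ?_ hp)
    intro r hr
    rw [Submodule.mem_annihilator_span_singleton]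
    obtain ⟨z, hz⟩ := hator r hr
    rw [← map_smul, ← hz, hcomp0]
  let y : ↥(torsionZ R Z E1) := ⟨d0 ξ, hy0tor⟩
  have hyg : S.g y = 0 := by
    apply Subtype.ext
    have h12 : IR.cocomplex.d 0 1 ≫ IR.cocomplex.d 1 2 = 0 := IR.cocomplex.d_comp_d 0 1 2
    show (IR.cocomplex.d 1 2) (d0 ξ) = 0
    calc (IR.cocomplex.d 1 2) (d0 ξ) = (IR.cocomplex.d 0 1 ≫ IR.cocomplex.d 1 2) ξ := rfl
    _ = 0 := by rw [h12]; rfl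
  have hnontriv : Nontrivial (↥(LinearMap.ker S.g.hom) ⧸ LinearMap.range S.moduleCatToCycles) := by
    refine ⟨Submodule.Quotient.mk ⟨y, hyg⟩, 0, ?_⟩
    intro hcontra
    rw [Submodule.Quotient.mk_eq_zero] at hcontra
    obtain ⟨γ'', hγ'⟩ := hcontra
    let γ' : ↥(torsionZ R Z E0) := γ''
    have hval : S.f γ'' = y := congrArg Subtype.val hγ'
    have hγval : (IR.cocomplex.d 0 1) γ'.1 = d0 ξ := congrArg Subtype.val hval
    have hker : ξ - γ'.1 ∈ LinearMap.ker d0.hom := by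
      simp only [LinearMap.mem_ker, map_sub]
      rw [show d0.hom γ'.1 = d0.hom ξ from hγval, sub_self]
    rw [← hexact] at hker
    exact hnot γ'.1 γ'.2 hker
  -- transfer along isomorphisms
  have e : HZ R Z 1 M ≅ S.moduleCatLeftHomologyData.H :=
    (IR.isoRightDerivedObj (gammaZ R Z) 1) ≪≫
      (K.homologyIsoSc' 0 1 2 (CochainComplex.prev_nat_succ 0) (CochainComplex.next ℕ 1)) ≪≫
      S.moduleCatHomologyIso
  haveI : Nontrivial ↑S.moduleCatLeftHomologyData.H := hnontriv
  exact Equiv.nontrivial e.toLinearEquiv.toEquiv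

end NontrivialH1

/-- If `depth R ≥ 1`, `I ≠ m` is `m`-primary and `J = (I :_R m)`,
then `H^1_m(J ⊗_R J) ≠ 0`. -/
theorem localCohomology_one_tensor_colon_ne_zero (R : Type u) [CommRing R] [IsLocalRing R]
    [IsNoetherianRing R] (hdepth : 1 ≤ moduleDepth R R)
    (I : Ideal R) (hI : I.radical = IsLocalRing.maximalIdeal R)
    (hne : I ≠ IsLocalRing.maximalIdeal R) :
    Nontrivial (HZ R (maxSet R) 1
      (TensorProduct R (I.colon (IsLocalRing.maximalIdeal R))
        (I.colon (IsLocalRing.maximalIdeal R)))) := by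
  classical
  set m : Ideal R := IsLocalRing.maximalIdeal R with hm
  set J : Ideal R := I.colon m with hJ
  -- a regular element in m
  obtain ⟨t, htm, htreg⟩ : ∃ t : R, t ∈ m ∧ IsSMulRegular R t := by
    obtain ⟨x, hxS, hx1⟩ : ∃ x ∈ {n : ℕ∞ | ∃ rs : List R, (rs.length : ℕ∞) = n ∧
        (∀ r ∈ rs, r ∈ IsLocalRing.maximalIdeal R) ∧
        RingTheory.Sequence.IsWeaklyRegular R rs}, 1 ≤ x := by
      by_contra hcon
      push_neg at hcon
      have hle : moduleDepth R R ≤ 0 := sSup_le (fun b hb => by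
        have := hcon b hb
        exact Order.le_of_lt_succ (by simpa using this))
      have := hdepth.trans hle
      simp at this
    obtain ⟨rs, hlen, hmem, hreg⟩ := hxS
    have hlen1 : 1 ≤ rs.length := by
      by_contra hl
      have : rs.length = 0 := by omega
      rw [this] at hlen
      rw [← hlen] at hx1
      simp at hx1
    have hrsnil : rs ≠ [] := by
      intro hnil; rw [hnil] at hlen1; simp at hlen1
    obtain ⟨t, rest, rfl⟩ := List.exists_cons_of_ne_nil hrsnil
    refine ⟨t, hmem t List.mem_cons_self, ?_⟩
    exact ((RingTheory.Sequence.isWeaklyRegular_cons_iff R t rest).mp hreg).1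
  -- basic ideal facts
  have hIm : I ≤ m := hI ▸ Ideal.le_radical
  have hIJ : I ≤ J := by
    intro r hr
    rw [hJ, Submodule.mem_colon]
    intro p _
    rw [smul_eq_mul]
    exact I.mul_mem_right p hr
  have hJtop : J ≠ ⊤ := by
    intro htop
    apply hne
    refine le_antisymm hIm ?_
    intro p hp
    have h1 : (1 : R) ∈ J := htop ▸ Submodule.mem_top
    rw [hJ, Submodule.mem_colon] at h1
    simpa using h1 p hp
  have hJm : J ≤ m := IsLocalRing.le_maximalIdeal hJtop
  obtain ⟨c, hc⟩ : ∃ c : ℕ, m ^ c ≤ I := by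
    obtain ⟨c, hc⟩ := Ideal.exists_radical_pow_le_of_fg I (by
      rw [hI]; exact IsNoetherian.noetherian _)
    exact ⟨c, by rwa [hI] at hc⟩
  -- the multiplication map and its kernel
  set μ : TensorProduct R ↥J ↥J →ₗ[R] R := Submodule.mulMap J J with hμ
  have hμrange : LinearMap.range μ = J * J := Submodule.mulMap_range J J
  have key : ∀ (u v : ↥J) (x : TensorProduct R ↥J ↥J),
      (u.1 * v.1) • x = (μ x) • (u ⊗ₜ[R] v) := by
    intro u v x
    induction x using TensorProduct.induction_on with
    | zero => simp
    | tmul a b =>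
        rw [hμ, Submodule.mulMap_tmul]
        have h1 : (u.1 * v.1) • (a ⊗ₜ[R] b) = (u.1 • a) ⊗ₜ[R] (v.1 • b) := by
          rw [mul_smul, ← TensorProduct.tmul_smul, TensorProduct.smul_tmul']
        have h2 : (a.1 * b.1) • (u ⊗ₜ[R] v) = (a.1 • u) ⊗ₜ[R] (b.1 • v) := by
          rw [mul_smul, ← TensorProduct.tmul_smul, TensorProduct.smul_tmul']
        rw [h1, h2]
        have e1 : u.1 • a = a.1 • u := Subtype.ext (by simp [smul_eq_mul, mul_comm])
        have e2 : v.1 • b = b.1 • v := Subtype.ext (by simp [smul_eq_mul, mul_comm])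
        rw [e1, e2]
    | add x y hx hy => rw [smul_add, hx, hy, map_add, add_smul]
  have hKkill : ∀ x : TensorProduct R ↥J ↥J, μ x = 0 → ∀ r ∈ I * I, r • x = 0 := by
    intro x hx r hr
    refine Submodule.mul_induction_on hr ?_ ?_
    · intro u hu v hv
      rw [show u * v = ((⟨u, hIJ hu⟩ : ↥J).1 * (⟨v, hIJ hv⟩ : ↥J).1) from rfl,
        key ⟨u, hIJ hu⟩ ⟨v, hIJ hv⟩ x, hx, zero_smul]
    · intro p q hp hq
      rw [add_smul, hp, hq, add_zero]
  have hmcc : m ^ (c + c) ≤ I * I := by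
    rw [pow_add]
    exact Ideal.mul_mono hc hc
  -- finiteness and Artin–Rees
  haveI hJfin : Module.Finite R ↥J :=
    Module.Finite.iff_fg.mpr (IsNoetherian.noetherian J)
  haveI : Module.Finite R (TensorProduct R ↥J ↥J) := inferInstance
  obtain ⟨k, hk⟩ := m.exists_pow_inf_eq_pow_smul (M := TensorProduct R ↥J ↥J)
    (LinearMap.ker μ)
  set n₀ : ℕ := k + (c + c) with hn₀
  have hdisj : (m ^ n₀ • ⊤ : Submodule R (TensorProduct R ↥J ↥J)) ⊓ LinearMap.ker μ
      = ⊥ := by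
    have h1 := hk n₀ (Nat.le_add_right _ _)
    rw [show n₀ - k = c + c from by omega] at h1
    rw [h1, eq_bot_iff]
    rw [Submodule.smul_le]
    intro r hr x hx
    rw [Submodule.mem_bot]
    exact hKkill x hx.2 r (hmcc hr)
  set M₀ : Submodule R (TensorProduct R ↥J ↥J) := m ^ n₀ • ⊤ with hM₀
  set ν : ↥M₀ →ₗ[R] R := μ ∘ₗ M₀.subtype with hν
  have hνker : LinearMap.ker ν = ⊥ := by
    rw [hν, LinearMap.ker_comp, eq_bot_iff]
    rintro ⟨x, hxM⟩ hx
    simp only [Submodule.mem_comap, Submodule.coe_subtype] at hx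
    have hxb : x ∈ (⊥ : Submodule R (TensorProduct R ↥J ↥J)) := by
      rw [← hdisj]; exact ⟨hxM, hx⟩
    rw [Submodule.mem_bot] at hxb
    exact Submodule.mem_bot (R := R) |>.mpr (Subtype.ext hxb)
  have hνinj : Function.Injective ν := by
    intro x y hxy
    have hxy' : (x : TensorProduct R ↥J ↥J) - y ∈ M₀ ⊓ LinearMap.ker μ :=
      ⟨M₀.sub_mem x.2 y.2, by
        show μ ((x : TensorProduct R ↥J ↥J) - y) = 0
        rw [map_sub]; exact sub_eq_zero.mpr hxy⟩
    rw [hdisj] at hxy'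
    exact Subtype.ext (sub_eq_zero.mp ((Submodule.mem_bot (R := R)).mp hxy'))
  set a : Ideal R := m ^ (n₀ + (c + c)) with ha
  have ha_le : a ≤ LinearMap.range ν := by
    have hr1 : LinearMap.range ν = Submodule.map μ M₀ := by
      rw [hν, LinearMap.range_comp, Submodule.range_subtype]
    rw [hr1, hM₀, Submodule.map_smul'', Submodule.map_top, hμrange, ha, pow_add]
    refine Ideal.mul_mono le_rfl ?_
    refine le_trans hmcc (Ideal.mul_mono hIJ hIJ)
  have hprime : ∀ p : PrimeSpectrum R, a ≤ p.asIdeal → p ∈ maxSet R := by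
    intro p hp
    haveI := p.isPrime
    show m ≤ p.asIdeal
    exact Ideal.IsPrime.le_of_pow_le (ha ▸ hp)
  have htorOf : ∀ (X : Type u) [AddCommGroup X] [Module R X] (x : X),
      (∀ r ∈ a, r • x = 0) → x ∈ torsionZ R (maxSet R) X := by
    intro X _ _ x hx p hp
    refine hprime p (le_trans ?_ hp)
    intro r hr
    rw [Submodule.mem_annihilator_span_singleton]
    exact hx r hr
  -- apply the abstract nonvanishing lemma
  refine nontrivial_HZ_one_of R (maxSet R) (TensorProduct R ↥J ↥J) ?_
  intro E hE f hf
  haveI : Injective E := hE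
  haveI : Mono f := (ModuleCat.mono_iff_injective f).mpr hf
  -- the injective module containing R
  set ER : ModuleCat.{u} R := Injective.under (ModuleCat.of R R) with hER
  set ιR : ModuleCat.of R R ⟶ ER := Injective.ι (ModuleCat.of R R) with hιR
  have hιRinj : Function.Injective ιR := (ModuleCat.mono_iff_injective ιR).mp inferInstance
  -- the partial "inverse of μ" defined on a
  set lam : ↥a →ₗ[R] TensorProduct R ↥J ↥J :=
    M₀.subtype ∘ₗ ((LinearEquiv.ofInjective ν hνinj).symm : _ →ₗ[R] _) ∘ₗ
      Submodule.inclusion ha_le with hlam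
  have hlamμ : ∀ w : ↥a, μ (lam w) = w.1 := by
    intro w
    show ν ((LinearEquiv.ofInjective ν hνinj).symm (Submodule.inclusion ha_le w)) = w.1
    rw [← LinearEquiv.ofInjective_apply ν (h := hνinj), LinearEquiv.apply_symm_apply]
    rfl
  -- the element ξ
  have hamono : Mono (show ModuleCat.of R ↥a ⟶ ModuleCat.of R R from ModuleCat.ofHom a.subtype) :=
    (ModuleCat.mono_iff_injective _).mpr (Submodule.injective_subtype a)
  set gext : ModuleCat.of R R ⟶ E :=
    @Injective.factorThru _ _ _ _ _ _
      (show ModuleCat.of R ↥a ⟶ E from ModuleCat.ofHom (f.hom ∘ₗ lam))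
      (show ModuleCat.of R ↥a ⟶ ModuleCat.of R R from ModuleCat.ofHom a.subtype) hamono with hgext
  have hgextfac : ∀ w : ↥a, gext w.1 = f (lam w) := by
    intro w
    have := Injective.comp_factorThru
      (show ModuleCat.of R ↥a ⟶ E from ModuleCat.ofHom (f.hom ∘ₗ lam))
      (show ModuleCat.of R ↥a ⟶ ModuleCat.of R R from ModuleCat.ofHom a.subtype)
    exact ConcreteCategory.congr_hom this w
  set ξ : ↑E := gext (1 : R) with hξ
  have hξsmul : ∀ r (hr : r ∈ a), r • ξ = f (lam ⟨r, hr⟩) := by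
    intro r hr
    rw [hξ, ← map_smul, smul_eq_mul, mul_one]
    exact hgextfac ⟨r, hr⟩
  refine ⟨ξ, a, hprime, ?_, ?_⟩
  · intro r hr
    rw [hξsmul r hr]
    exact ⟨lam ⟨r, hr⟩, rfl⟩
  · -- the key non-liftability
    rintro γ hγ ⟨z, hz⟩
    -- extend μ along f
    have hφfac := Injective.comp_factorThru
      (show ModuleCat.of R (TensorProduct R ↥J ↥J) ⟶ ER from
        ModuleCat.ofHom (ιR.hom ∘ₗ μ)) f
    set φ : E ⟶ ER := Injective.factorThru
      (show ModuleCat.of R (TensorProduct R ↥J ↥J) ⟶ ER from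
        ModuleCat.ofHom (ιR.hom ∘ₗ μ)) f with hφ
    have hφf : ∀ x : TensorProduct R ↥J ↥J, φ (f x) = ιR (μ x) := by
      intro x
      exact ConcreteCategory.congr_hom hφfac x
    -- φ ξ is ιR 1 up to torsion
    have hw : (φ ξ - ιR (1 : R)) ∈ torsionZ R (maxSet R) ER := by
      refine htorOf _ _ ?_
      intro r hr
      rw [smul_sub, ← map_smul φ.hom, hξsmul r hr, hφf, hlamμ, ← map_smul ιR.hom, smul_eq_mul,
        mul_one, sub_self]
    have hφγ : φ γ ∈ torsionZ R (maxSet R) ER :=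
      torsionZ_map_mem R (maxSet R) φ.hom γ hγ
    -- hence ιR ((1 : R) - μ z) is torsion
    have htor : ιR ((1 : R) - μ z) ∈ torsionZ R (maxSet R) ER := by
      have hz' : φ (f z) = φ ξ - φ γ := by rw [hz, map_sub]
      rw [hφf] at hz'
      have : ιR ((1 : R) - μ z) = φ γ - (φ ξ - ιR (1 : R)) := by
        rw [map_sub, hz']
        abel
      rw [this]
      exact Submodule.sub_mem _ hφγ hw
    -- t-power kills it
    have htrad : t ∈ ((R ∙ (ιR ((1 : R) - μ z))).annihilator).radical := by
      rw [Ideal.radical_eq_sInf]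
      rw [Submodule.mem_sInf]
      intro p hp
      haveI := hp.2
      have := htor ⟨p, hp.2⟩ hp.1
      exact this htm
    obtain ⟨k', hk'⟩ := htrad
    have h0 : ιR ((t ^ k') • ((1 : R) - μ z)) = 0 := by
      rw [map_smul]
      rw [← Submodule.mem_annihilator_span_singleton]
      exact hk'
    have h0' : (t ^ k') • ((1 : R) - μ z) = 0 := by
      apply hιRinj
      rw [h0, map_zero]
    have h1z : (1 : R) - μ z = 0 := by
      refine htreg.pow k' ?_
      show t ^ k' * ((1 : R) - μ z) = t ^ k' * 0
      rw [mul_zero, ← smul_eq_mul]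
      exact h0'
    have h1m : (1 : R) ∈ m := by
      have hμz : μ z ∈ m := by
        have : μ z ∈ J * J := hμrange ▸ ⟨z, rfl⟩
        exact hJm (Ideal.mul_le_left this)
      have : (1 : R) = μ z := by linear_combination h1z
      rwa [this]
    exact (IsLocalRing.maximalIdeal.isMaximal R).ne_top (Ideal.eq_top_of_isUnit_mem _ h1m isUnit_one)
end
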